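/- arXiv:1801.05257 — 9 statements merged into one kernel-verified Lean document; each statement's English description precedes it below -/
import Mathlib

section
/- For every binary quartic f (homogeneous polynomial of degree 4 in ℂ[x,y]), the identity ⟨⟨f,f⟩_2, ⟨f,f⟩_2⟩_4 = 6·(⟨f,f⟩_4)^2 holds, where ⟨f,f⟩_2 is again a binary quartic and ⟨f,f⟩_4 and both sides of the identity are constants (degree-0 polynomials). This identity is the algebraic compatibility, on the space Sym^4(ℂ^2) of binary quartics, between the quadratic form V ↦ ⟨V,V⟩_4 and the symmetric cubic form V ↦ ⟨⟨V,V⟩_2, V⟩_4, which together define an SO(3)-structure. -/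
open MvPolynomial

/-- Partial derivative with respect to the first variable `x = X 0`. -/
noncomputable def dX : MvPolynomial (Fin 2) ℂ → MvPolynomial (Fin 2) ℂ :=
  fun f => MvPolynomial.pderiv (0 : Fin 2) f

/-- Partial derivative with respect to the second variable `y = X 1`. -/
noncomputable def dY : MvPolynomial (Fin 2) ℂ → MvPolynomial (Fin 2) ℂ :=
  fun f => MvPolynomial.pderiv (1 : Fin 2) f

/-- The `k`-th transvectant
`⟨φ,ψ⟩_k = Σ_{j=0}^{k} (−1)^j (k choose j) (∂^k φ/∂x^{k−j}∂y^j)·(∂^k ψ/∂x^j ∂y^{k−j})`. -/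
noncomputable def transvectant (k : ℕ) (φ ψ : MvPolynomial (Fin 2) ℂ) :
    MvPolynomial (Fin 2) ℂ :=
  ∑ j ∈ Finset.range (k + 1),
    ((-1 : ℂ) ^ j * (k.choose j : ℂ)) •
      (dX^[k - j] (dY^[j] φ) * dX^[j] (dY^[k - j] ψ))

/-! ### Auxiliary machinery -/

/-- The generic binary quartic with coefficients `a0, …, a4`. -/
noncomputable def P (a0 a1 a2 a3 a4 : ℂ) : MvPolynomial (Fin 2) ℂ :=
  C a0 * X 0 ^ 4 + C a1 * X 0 ^ 3 * X 1 + C a2 * X 0 ^ 2 * X 1 ^ 2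
    + C a3 * X 0 * X 1 ^ 3 + C a4 * X 1 ^ 4

/-- The exponent `x^p y^q` as a `Finsupp`. -/
noncomputable def md (p q : ℕ) : Fin 2 →₀ ℕ := Finsupp.single 0 p + Finsupp.single 1 q

lemma md_apply0 (p q : ℕ) : md p q 0 = p := by simp [md, Finsupp.single_apply]
lemma md_apply1 (p q : ℕ) : md p q 1 = q := by simp [md, Finsupp.single_apply]

lemma md_inj {p q p' q' : ℕ} : md p q = md p' q' ↔ p = p' ∧ q = q' := by
  constructor
  · intro h
    exact ⟨by rw [← md_apply0 p q, h, md_apply0], by rw [← md_apply1 p q, h, md_apply1]⟩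
  · rintro ⟨rfl, rfl⟩; rfl

lemma key (a : ℂ) (p q : ℕ) : (C a * X (0 : Fin 2) ^ p * X 1 ^ q : MvPolynomial (Fin 2) ℂ)
    = monomial (md p q) a := by
  rw [X_pow_eq_monomial, X_pow_eq_monomial, C_apply, monomial_mul, monomial_mul, md,
    zero_add, mul_one, mul_one]

lemma P_eq (a0 a1 a2 a3 a4 : ℂ) : P a0 a1 a2 a3 a4 =
    monomial (md 4 0) a0 + monomial (md 3 1) a1 + monomial (md 2 2) a2
      + monomial (md 1 3) a3 + monomial (md 0 4) a4 := by
  rw [P, show (C a0 * X 0 ^ 4 : MvPolynomial (Fin 2) ℂ) = C a0 * X 0 ^ 4 * X 1 ^ 0 by ring,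
    key, show (C a1 * X 0 ^ 3 * X 1 : MvPolynomial (Fin 2) ℂ) = C a1 * X 0 ^ 3 * X 1 ^ 1 by ring,
    key, key, show (C a3 * X 0 * X 1 ^ 3 : MvPolynomial (Fin 2) ℂ) = C a3 * X 0 ^ 1 * X 1 ^ 3 by ring,
    key, show (C a4 * X 1 ^ 4 : MvPolynomial (Fin 2) ℂ) = C a4 * X 0 ^ 0 * X 1 ^ 4 by ring, key]

/-- Every homogeneous quartic is of the generic form `P a0 a1 a2 a3 a4`. -/
lemma rep (f : MvPolynomial (Fin 2) ℂ) (hf : f.IsHomogeneous 4) :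
    f = P (coeff (md 4 0) f) (coeff (md 3 1) f) (coeff (md 2 2) f)
          (coeff (md 1 3) f) (coeff (md 0 4) f) := by
  rw [P_eq]
  ext m
  simp only [coeff_add, coeff_monomial]
  have hdeg : m.degree = m 0 + m 1 := by
    show ∑ i ∈ m.support, m i = m 0 + m 1
    rw [Finset.sum_subset (Finset.subset_univ m.support)
      (by intro x _ hx; simpa using Finsupp.notMem_support_iff.mp hx)]
    exact Fin.sum_univ_two m
  by_cases h4 : m 0 + m 1 = 4
  · have hm : m = md (m 0) (m 1) := by
      ext i
      fin_cases i <;> simp [md, Finsupp.single_apply]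
    obtain ⟨k, hk⟩ : ∃ k, m 0 = k := ⟨m 0, rfl⟩
    have h1 : m 1 = 4 - k := by omega
    have h0 : k ≤ 4 := by omega
    rw [hk, h1] at hm
    rw [hm]
    interval_cases k <;> simp [md_inj]
  · have hne : ∀ p q : ℕ, p + q = 4 → md p q ≠ m := by
      intro p q hpq hEq
      apply h4
      rw [← hEq, md_apply0, md_apply1]
      exact hpq
    rw [hf.coeff_eq_zero (by rw [hdeg]; exact h4),
      if_neg (hne 4 0 (by norm_num)), if_neg (hne 3 1 (by norm_num)),
      if_neg (hne 2 2 (by norm_num)), if_neg (hne 1 3 (by norm_num)),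
      if_neg (hne 0 4 (by norm_num))]
    norm_num

lemma iter0 {α : Type*} (g : α → α) (x : α) : g^[0] x = x := rfl
lemma iter1 {α : Type*} (g : α → α) (x : α) : g^[1] x = g x := rfl
lemma iter2 {α : Type*} (g : α → α) (x : α) : g^[2] x = g (g x) := rfl
lemma iter3 {α : Type*} (g : α → α) (x : α) : g^[3] x = g (g (g x)) := rfl
lemma iter4 {α : Type*} (g : α → α) (x : α) : g^[4] x = g (g (g (g x))) := rfl

lemma hx10 : pderiv (0 : Fin 2) (X 1 : MvPolynomial (Fin 2) ℂ) = 0 :=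
  pderiv_X_of_ne (by decide)
lemma hx01 : pderiv (1 : Fin 2) (X 0 : MvPolynomial (Fin 2) ℂ) = 0 :=
  pderiv_X_of_ne (by decide)

lemma dx_pow (n : ℕ) : pderiv (0 : Fin 2) (X 0 ^ n : MvPolynomial (Fin 2) ℂ)
    = C (n : ℂ) * X 0 ^ (n - 1) := by
  rw [pderiv_pow, pderiv_X_self, mul_one, ← map_natCast (C : ℂ →+* MvPolynomial (Fin 2) ℂ) n]
lemma dy_pow (n : ℕ) : pderiv (1 : Fin 2) (X 1 ^ n : MvPolynomial (Fin 2) ℂ)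
    = C (n : ℂ) * X 1 ^ (n - 1) := by
  rw [pderiv_pow, pderiv_X_self, mul_one, ← map_natCast (C : ℂ →+* MvPolynomial (Fin 2) ℂ) n]
lemma dx_pow' (n : ℕ) : pderiv (0 : Fin 2) (X 1 ^ n : MvPolynomial (Fin 2) ℂ) = 0 := by
  rw [pderiv_pow, hx10, mul_zero]
lemma dy_pow' (n : ℕ) : pderiv (1 : Fin 2) (X 0 ^ n : MvPolynomial (Fin 2) ℂ) = 0 := by
  rw [pderiv_pow, hx01, mul_zero]

lemma dX_apply (p : MvPolynomial (Fin 2) ℂ) : dX p = pderiv (0 : Fin 2) p := rfl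
lemma dY_apply (p : MvPolynomial (Fin 2) ℂ) : dY p = pderiv (1 : Fin 2) p := rfl

/-- Explicit formula for `⟨f,f⟩₂` on a generic quartic. -/
lemma t2_eval (a0 a1 a2 a3 a4 : ℂ) :
    transvectant 2 (P a0 a1 a2 a3 a4) (P a0 a1 a2 a3 a4) =
      P (48*a0*a2 - 18*a1^2) (144*a0*a3 - 24*a1*a2) (288*a0*a4 + 36*a1*a3 - 24*a2^2)
        (144*a1*a4 - 24*a2*a3) (48*a2*a4 - 18*a3^2) := by
  simp only [transvectant, Finset.sum_range_succ, Finset.sum_range_zero, zero_add,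
    Nat.reduceSub, Nat.reduceAdd, iter0, iter1, iter2, iter3, iter4, dX_apply, dY_apply, P,
    map_add, pderiv_mul, dx_pow, dy_pow, dx_pow', dy_pow', pderiv_X_self, hx10, hx01,
    pderiv_C, smul_eq_C_mul, mul_zero, zero_mul, add_zero, zero_add, mul_one, one_mul,
    pow_zero, pow_one]
  norm_num [Nat.choose, map_ofNat]
  ring

/-- Explicit formula for `⟨f,f⟩₄` on a generic quartic. -/
lemma t4_eval (a0 a1 a2 a3 a4 : ℂ) :
    transvectant 4 (P a0 a1 a2 a3 a4) (P a0 a1 a2 a3 a4) =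
      C (1152*a0*a4 - 288*a1*a3 + 96*a2^2) := by
  simp only [transvectant, Finset.sum_range_succ, Finset.sum_range_zero, zero_add,
    Nat.reduceSub, Nat.reduceAdd, iter0, iter1, iter2, iter3, iter4, dX_apply, dY_apply, P,
    map_add, pderiv_mul, dx_pow, dy_pow, dx_pow', dy_pow', pderiv_X_self, hx10, hx01,
    pderiv_C, smul_eq_C_mul, mul_zero, zero_mul, add_zero, zero_add, mul_one, one_mul,
    pow_zero, pow_one]
  norm_num [Nat.choose, map_ofNat]
  ring

/-- For every binary quartic `f`, the identity
`⟨⟨f,f⟩_2, ⟨f,f⟩_2⟩_4 = 6·(⟨f,f⟩_4)^2` holds: the algebraic compatibility between the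
quadratic form `V ↦ ⟨V,V⟩_4` and the cubic form `V ↦ ⟨⟨V,V⟩_2, V⟩_4` of the SO(3)-structure. -/
theorem quartic_so3_identity (f : MvPolynomial (Fin 2) ℂ) (hf : f.IsHomogeneous 4) :
    transvectant 4 (transvectant 2 f f) (transvectant 2 f f)
      = (6 : ℂ) • (transvectant 4 f f) ^ 2 := by
  rw [rep f hf, t2_eval, t4_eval, t4_eval, smul_eq_C_mul, ← C_pow, ← C_mul, C_inj]
  ring
end

section
/- Let V be a 5-dimensional real inner product space with orthonormal basis e_1,…,e_5, and let G : V × V × V → ℝ be a symmetric trilinear form satisfying (i) Σ_{i=1}^{5} G(e_i, e_i, v) = 0 for all v ∈ V (G is trace-free) and (ii) 6·Σ_{i=1}^{5} G(e_i, v, v)^2 = ⟨v,v⟩^2 for all v ∈ V. Then Σ_{i,j=1}^{5} G(e_i, e_j, v)·G(e_i, e_j, w) = (7/12)·⟨v,w⟩ for all v, w ∈ V, and Σ_{i,j,k=1}^{5} G(e_i, e_j, e_k)^2 = 35/12. -/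
open RealInnerProductSpace

/-- Let `V` be a 5-dimensional real inner product space with orthonormal basis `e`, and let
`G` be a symmetric trilinear form which is trace-free and satisfies
`6·Σ_i G(e_i,v,v)^2 = ⟨v,v⟩^2`.  Then `Σ_{i,j} G(e_i,e_j,v)·G(e_i,e_j,w) = (7/12)·⟨v,w⟩`
and `Σ_{i,j,k} G(e_i,e_j,e_k)^2 = 35/12`. -/
theorem so3_structure_traces
    {V : Type*} [NormedAddCommGroup V] [InnerProductSpace ℝ V]
    (hdim : Module.finrank ℝ V = 5)
    (e : OrthonormalBasis (Fin 5) ℝ V)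
    (G : V →ₗ[ℝ] V →ₗ[ℝ] V →ₗ[ℝ] ℝ)
    (hsymm₁ : ∀ u v w : V, G u v w = G v u w)
    (hsymm₂ : ∀ u v w : V, G u v w = G u w v)
    (htracefree : ∀ v : V, ∑ i : Fin 5, G (e i) (e i) v = 0)
    (hcubic : ∀ v : V, 6 * ∑ i : Fin 5, (G (e i) v v) ^ 2 = ⟪v, v⟫ ^ 2) :
    (∀ v w : V, ∑ i : Fin 5, ∑ j : Fin 5,
        G (e i) (e j) v * G (e i) (e j) w = (7 / 12) * ⟪v, w⟫) ∧
    (∑ i : Fin 5, ∑ j : Fin 5, ∑ k : Fin 5, (G (e i) (e j) (e k)) ^ 2 = 35 / 12) := by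
  have r : ∀ (p q : V) (i : Fin 5), G (e i) (p + q) (p + q)
      = G (e i) p p + (2 : ℝ) * G (e i) p q + G (e i) q q := by
    intro p q i
    simp only [map_add, LinearMap.add_apply]
    rw [hsymm₂ (e i) q p]
    ring
  have rs : ∀ (p q : V) (i : Fin 5), G (e i) (p - q) (p - q)
      = G (e i) p p + (-2 : ℝ) * G (e i) p q + G (e i) q q := by
    intro p q i
    simp only [map_sub, LinearMap.sub_apply]
    rw [hsymm₂ (e i) q p]
    ring
  -- first polarization of the quartic identity
  have key1 : ∀ v x : V,
      12 * ∑ i : Fin 5, G (e i) v v * G (e i) x x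
        + 24 * ∑ i : Fin 5, G (e i) v x * G (e i) v x
      = 2 * (⟪v, v⟫ * ⟪x, x⟫) + 4 * (⟪v, x⟫ * ⟪v, x⟫) := by
    intro v x
    have h1 := hcubic (v + x)
    have h2 := hcubic (v - x)
    have h3 := hcubic v
    have h4 := hcubic x
    simp only [r v x, rs v x, real_inner_add_add_self, real_inner_sub_sub_self] at h1 h2
    have E : ∀ c : ℝ, ∑ i : Fin 5, (G (e i) v v + c * G (e i) v x + G (e i) x x) ^ 2
        = ∑ i : Fin 5, (G (e i) v v) ^ 2
          + 2 * c * ∑ i : Fin 5, G (e i) v v * G (e i) v x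
          + 2 * ∑ i : Fin 5, G (e i) v v * G (e i) x x
          + c ^ 2 * ∑ i : Fin 5, G (e i) v x * G (e i) v x
          + 2 * c * ∑ i : Fin 5, G (e i) v x * G (e i) x x
          + ∑ i : Fin 5, (G (e i) x x) ^ 2 := by
      intro c
      simp only [Finset.mul_sum, ← Finset.sum_add_distrib]
      exact Finset.sum_congr rfl fun i _ => by ring
    rw [E 2] at h1
    rw [E (-2)] at h2
    linear_combination (h1 + h2 - 2 * h3 - 2 * h4) / 2
  -- second polarization
  have key2 : ∀ v w u : V,
      24 * ∑ i : Fin 5, G (e i) v v * G (e i) w u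
        + 48 * ∑ i : Fin 5, G (e i) v w * G (e i) v u
      = 4 * (⟪v, v⟫ * ⟪w, u⟫) + 8 * (⟪v, w⟫ * ⟪v, u⟫) := by
    intro v w u
    have k1 := key1 v (w + u)
    have k2 := key1 v w
    have k3 := key1 v u
    simp only [r w u] at k1
    simp only [map_add, inner_add_right, inner_add_left, real_inner_comm u w] at k1
    have E2 : ∑ i : Fin 5, G (e i) v v
          * (G (e i) w w + (2 : ℝ) * G (e i) w u + G (e i) u u)
        = ∑ i : Fin 5, G (e i) v v * G (e i) w w
          + 2 * ∑ i : Fin 5, G (e i) v v * G (e i) w u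
          + ∑ i : Fin 5, G (e i) v v * G (e i) u u := by
      simp only [Finset.mul_sum, ← Finset.sum_add_distrib]
      exact Finset.sum_congr rfl fun i _ => by ring
    have E3 : ∑ i : Fin 5, (G (e i) v w + G (e i) v u) * (G (e i) v w + G (e i) v u)
        = ∑ i : Fin 5, G (e i) v w * G (e i) v w
          + 2 * ∑ i : Fin 5, G (e i) v w * G (e i) v u
          + ∑ i : Fin 5, G (e i) v u * G (e i) v u := by
      simp only [Finset.mul_sum, ← Finset.sum_add_distrib]
      exact Finset.sum_congr rfl fun i _ => by ring
    rw [E2, E3] at k1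
    linear_combination k1 - k2 - k3 - 4 * (inner ℝ v v : ℝ) * real_inner_comm u w
  have hjj : ∀ j : Fin 5, ⟪e j, e j⟫ = (1 : ℝ) := by
    intro j
    rw [real_inner_self_eq_norm_sq, e.orthonormal.1 j]
    norm_num
  have trace2 : ∀ i : Fin 5, ∑ j : Fin 5, G (e i) (e j) (e j) = 0 := by
    intro i
    have h : ∀ j : Fin 5, G (e i) (e j) (e j) = G (e j) (e j) (e i) := by
      intro j
      rw [hsymm₁ (e i) (e j) (e j), hsymm₂ (e j) (e i) (e j)]
    rw [Finset.sum_congr rfl fun j _ => h j]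
    exact htracefree (e i)
  have main : ∀ v w : V, ∑ i : Fin 5, ∑ j : Fin 5,
      G (e i) (e j) v * G (e i) (e j) w = (7 / 12) * ⟪v, w⟫ := by
    intro v w
    have hsum : ∑ j : Fin 5,
        (24 * ∑ i : Fin 5, G (e i) (e j) (e j) * G (e i) v w
          + 48 * ∑ i : Fin 5, G (e i) (e j) v * G (e i) (e j) w)
        = ∑ j : Fin 5, (4 * (⟪e j, e j⟫ * ⟪v, w⟫) + 8 * (⟪e j, v⟫ * ⟪e j, w⟫)) :=
      Finset.sum_congr rfl fun j _ => key2 (e j) v w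
    have h1 : ∑ j : Fin 5, ∑ i : Fin 5, G (e i) (e j) (e j) * G (e i) v w = 0 := by
      rw [Finset.sum_comm]
      apply Finset.sum_eq_zero
      intro i _
      rw [← Finset.sum_mul, trace2 i, zero_mul]
    have h2 : ∑ j : Fin 5, (⟪e j, v⟫ * ⟪e j, w⟫ : ℝ) = ⟪v, w⟫ := by
      calc ∑ j : Fin 5, (⟪e j, v⟫ * ⟪e j, w⟫ : ℝ)
          = ∑ j : Fin 5, (⟪v, e j⟫ * ⟪e j, w⟫ : ℝ) :=
            Finset.sum_congr rfl fun j _ => by rw [real_inner_comm (e j) v]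
        _ = ⟪v, w⟫ := e.sum_inner_mul_inner v w
    have hL : ∑ j : Fin 5,
        (24 * ∑ i : Fin 5, G (e i) (e j) (e j) * G (e i) v w
          + 48 * ∑ i : Fin 5, G (e i) (e j) v * G (e i) (e j) w)
        = 48 * ∑ j : Fin 5, ∑ i : Fin 5, G (e i) (e j) v * G (e i) (e j) w := by
      rw [Finset.sum_add_distrib, ← Finset.mul_sum, ← Finset.mul_sum, h1, mul_zero, zero_add]
    have hR : ∑ j : Fin 5, ((4 : ℝ) * (⟪e j, e j⟫ * ⟪v, w⟫) + 8 * (⟪e j, v⟫ * ⟪e j, w⟫))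
        = 28 * ⟪v, w⟫ := by
      have h4 : ∀ j : Fin 5, ((4 : ℝ) * (⟪e j, e j⟫ * ⟪v, w⟫) + 8 * (⟪e j, v⟫ * ⟪e j, w⟫))
          = 4 * ⟪v, w⟫ + 8 * (⟪e j, v⟫ * ⟪e j, w⟫) := fun j => by rw [hjj]; ring
      rw [Finset.sum_congr rfl fun j _ => h4 j, Finset.sum_add_distrib, ← Finset.mul_sum,
        ← Finset.mul_sum, h2, Finset.sum_const, Finset.card_univ, Fintype.card_fin,
        nsmul_eq_mul]
      push_cast
      ring
    rw [hL, hR] at hsum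
    have hswap : ∑ i : Fin 5, ∑ j : Fin 5, G (e i) (e j) v * G (e i) (e j) w
        = ∑ j : Fin 5, ∑ i : Fin 5, G (e i) (e j) v * G (e i) (e j) w := Finset.sum_comm
    rw [hswap]
    linarith [hsum]
  refine ⟨main, ?_⟩
  calc ∑ i : Fin 5, ∑ j : Fin 5, ∑ k : Fin 5, (G (e i) (e j) (e k)) ^ 2
      = ∑ i : Fin 5, ∑ k : Fin 5, ∑ j : Fin 5, (G (e i) (e j) (e k)) ^ 2 :=
        Finset.sum_congr rfl fun i _ => Finset.sum_comm
    _ = ∑ k : Fin 5, ∑ i : Fin 5, ∑ j : Fin 5, (G (e i) (e j) (e k)) ^ 2 := Finset.sum_comm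
    _ = ∑ k : Fin 5, ∑ i : Fin 5, ∑ j : Fin 5, G (e i) (e j) (e k) * G (e i) (e j) (e k) :=
        Finset.sum_congr rfl fun k _ => Finset.sum_congr rfl fun i _ =>
          Finset.sum_congr rfl fun j _ => by ring
    _ = ∑ k : Fin 5, (7 / 12) * ⟪e k, e k⟫ := Finset.sum_congr rfl fun k _ => main (e k) (e k)
    _ = 35 / 12 := by
        rw [Finset.sum_congr rfl fun k (_ : k ∈ Finset.univ) => by rw [hjj k],
          Finset.sum_const, Finset.card_univ, Fintype.card_fin, nsmul_eq_mul]
        norm_num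
end

section
/- Let I ⊆ ℝ be an open interval and let y : I → ℝ be five times differentiable with y''(x) > 0 for all x ∈ I. Then y satisfies the fifth-order ODE y⁽⁵⁾(x)·(y''(x))^2 = −(40/9)·(y'''(x))^3 + 5·y''(x)·y'''(x)·y''''(x) on I if and only if the graph of y lies on a conic: there exist real numbers (c_1, c_2, c_3, c_4, c_5, c_6), not all zero, such that c_1·y(x)^2 + c_2·x·y(x) + c_3·x^2 + c_4·y(x) + c_5·x + c_6 = 0 for all x ∈ I. -/
open Set

section helpers

lemma conicAux_deriv_zero {I : Set ℝ} (hIopen : IsOpen I) {f f' : ℝ → ℝ}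
    (h0 : ∀ x ∈ I, f x = 0) (hd : ∀ x ∈ I, HasDerivAt f (f' x) x) :
    ∀ x ∈ I, f' x = 0 := by
  intro x hx
  have hev : f =ᶠ[nhds x] fun _ => 0 :=
    Filter.eventually_of_mem (hIopen.mem_nhds hx) h0
  have h1 : HasDerivAt f 0 x :=
    (hasDerivAt_const x (0:ℝ)).congr_of_eventuallyEq hev
  exact (hd x hx).unique h1

lemma conicAux_const {I : Set ℝ} (hconv : Convex ℝ I) {f f' : ℝ → ℝ}
    (hd : ∀ x ∈ I, HasDerivAt f (f' x) x) (h0 : ∀ x ∈ I, f' x = 0)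
    {a b : ℝ} (ha : a ∈ I) (hb : b ∈ I) : f b = f a := by
  have := hconv.norm_image_sub_le_of_norm_hasDerivWithin_le
    (f' := f') (C := 0) (fun x hx => (hd x hx).hasDerivWithinAt)
    (fun x hx => by simp [h0 x hx]) ha hb
  simpa [sub_eq_zero] using this

lemma conicAux_ker (M : Matrix (Fin 5) (Fin 6) ℝ) :
    ∃ c : Fin 6 → ℝ, c ≠ 0 ∧ M.mulVec c = 0 := by
  have h := LinearMap.finrank_range_add_finrank_ker (M.mulVecLin)
  have hker : 0 < Module.finrank ℝ (LinearMap.ker M.mulVecLin) := by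
    have hr : Module.finrank ℝ (LinearMap.range M.mulVecLin) ≤ 5 := by
      simpa using (LinearMap.range M.mulVecLin).finrank_le
    simp at h; omega
  have : Nontrivial (LinearMap.ker M.mulVecLin) := Module.finrank_pos_iff.mp hker
  obtain ⟨v, hv⟩ := exists_ne (0 : LinearMap.ker M.mulVecLin)
  exact ⟨v.1, by simpa [Submodule.coe_eq_zero] using hv,
    by have h2 := LinearMap.mem_ker.mp v.2; rwa [Matrix.mulVecLin_apply] at h2⟩

variable {y d1 d2 d3 d4 d5 : ℝ → ℝ} {x : ℝ}

lemma conicAux_hdA (c0 c1 c3 : ℝ) (h0 : HasDerivAt y (d1 x) x) :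
    HasDerivAt (fun x => 2*c0*y x + c1*x + c3) (2*c0*d1 x + c1) x := by
  have h := ((h0.const_mul (2*c0)).add ((hasDerivAt_id x).const_mul c1)).add_const c3
  convert h using 1 <;> (try funext t) <;> (try simp only [id_eq, pow_one, Pi.add_apply, Pi.mul_apply, Pi.pow_apply]) <;> push_cast <;> first | rfl | ring_nf

lemma conicAux_hdB (c0 c1 : ℝ) (h1 : HasDerivAt d1 (d2 x) x) :
    HasDerivAt (fun x => 2*c0*d1 x + c1) (2*c0*d2 x) x :=
  (h1.const_mul (2*c0)).add_const c1

lemma conicAux_hdP0 (c0 c1 c2 c3 c4 c5 : ℝ) (h0 : HasDerivAt y (d1 x) x) :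
    HasDerivAt (fun x => c0 * (y x)^2 + c1 * x * y x + c2 * x^2 + c3 * y x + c4 * x + c5)
      ((2*c0*y x + c1*x + c3) * d1 x + (c1 * y x + 2*c2*x + c4)) x := by
  have h := (((((h0.pow 2).const_mul c0).add
      (((hasDerivAt_id x).mul h0).const_mul c1)).add
      ((hasDerivAt_pow 2 x).const_mul c2)).add (h0.const_mul c3)).add
      (((hasDerivAt_id x).const_mul c4).add_const c5)
  convert h using 1 <;> (try funext t) <;> (try simp only [id_eq, pow_one, Pi.add_apply, Pi.mul_apply, Pi.pow_apply]) <;> push_cast <;> first | rfl | ring_nf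

lemma conicAux_hdP1 (c0 c1 c2 c3 c4 : ℝ) (h0 : HasDerivAt y (d1 x) x)
    (h1 : HasDerivAt d1 (d2 x) x) :
    HasDerivAt (fun x => (2*c0*y x + c1*x + c3) * d1 x + (c1 * y x + 2*c2*x + c4))
      ((2*c0*y x + c1*x + c3) * d2 x + (2*c0*(d1 x)^2 + 2*c1*d1 x + 2*c2)) x := by
  have h := ((conicAux_hdA c0 c1 c3 h0).mul h1).add
    ((h0.const_mul c1).add (((hasDerivAt_id x).const_mul (2*c2)).add_const c4))
  convert h using 1 <;> (try funext t) <;> (try simp only [id_eq, pow_one, Pi.add_apply, Pi.mul_apply, Pi.pow_apply]) <;> push_cast <;> first | rfl | ring_nf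

lemma conicAux_hdP2 (c0 c1 c2 c3 : ℝ) (h0 : HasDerivAt y (d1 x) x)
    (h1 : HasDerivAt d1 (d2 x) x) (h2 : HasDerivAt d2 (d3 x) x) :
    HasDerivAt (fun x => (2*c0*y x + c1*x + c3) * d2 x + (2*c0*(d1 x)^2 + 2*c1*d1 x + 2*c2))
      ((2*c0*y x + c1*x + c3) * d3 x + 3*(2*c0*d1 x + c1) * d2 x) x := by
  have h := ((conicAux_hdA c0 c1 c3 h0).mul h2).add
    ((((h1.pow 2).const_mul (2*c0)).add (h1.const_mul (2*c1))).add_const (2*c2))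
  convert h using 1 <;> (try funext t) <;> (try simp only [id_eq, pow_one, Pi.add_apply, Pi.mul_apply, Pi.pow_apply]) <;> push_cast <;> first | rfl | ring_nf

lemma conicAux_hdP3 (c0 c1 c3 : ℝ) (h0 : HasDerivAt y (d1 x) x)
    (h1 : HasDerivAt d1 (d2 x) x) (h2 : HasDerivAt d2 (d3 x) x)
    (h3 : HasDerivAt d3 (d4 x) x) :
    HasDerivAt (fun x => (2*c0*y x + c1*x + c3) * d3 x + 3*(2*c0*d1 x + c1) * d2 x)
      ((2*c0*y x + c1*x + c3) * d4 x + (4*(2*c0*d1 x + c1) * d3 x + 6*c0*(d2 x)^2)) x := by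
  have h := ((conicAux_hdA c0 c1 c3 h0).mul h3).add
    (((conicAux_hdB c0 c1 h1).mul h2).const_mul 3)
  convert h using 1 <;> (try funext t) <;> (try simp only [id_eq, pow_one, Pi.add_apply, Pi.mul_apply, Pi.pow_apply]) <;> push_cast <;> first | rfl | ring_nf

lemma conicAux_hdP4 (c0 c1 c3 : ℝ) (h0 : HasDerivAt y (d1 x) x)
    (h1 : HasDerivAt d1 (d2 x) x) (h2 : HasDerivAt d2 (d3 x) x)
    (h3 : HasDerivAt d3 (d4 x) x) (h4 : HasDerivAt d4 (d5 x) x) :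
    HasDerivAt (fun x => (2*c0*y x + c1*x + c3) * d4 x + (4*(2*c0*d1 x + c1) * d3 x + 6*c0*(d2 x)^2))
      ((2*c0*y x + c1*x + c3) * d5 x + (5*(2*c0*d1 x + c1) * d4 x + 20*c0*d2 x*d3 x)) x := by
  have h := ((conicAux_hdA c0 c1 c3 h0).mul h4).add
    ((((conicAux_hdB c0 c1 h1).mul h3).const_mul 4).add ((h2.pow 2).const_mul (6*c0)))
  convert h using 1 <;> (try funext t) <;> (try simp only [id_eq, pow_one, Pi.add_apply, Pi.mul_apply, Pi.pow_apply]) <;> push_cast <;> first | rfl | ring_nf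

lemma conicAux_vec6 {α : Type*} (a b c d e f : α) :
    ![a,b,c,d,e,f] 0 = a ∧ ![a,b,c,d,e,f] 1 = b ∧ ![a,b,c,d,e,f] 2 = c ∧
    ![a,b,c,d,e,f] 3 = d ∧ ![a,b,c,d,e,f] 4 = e ∧ ![a,b,c,d,e,f] 5 = f :=
  ⟨rfl, rfl, rfl, rfl, rfl, rfl⟩

lemma conicAux_vec5 {α : Type*} (a b c d e : α) :
    ![a,b,c,d,e] 0 = a ∧ ![a,b,c,d,e] 1 = b ∧ ![a,b,c,d,e] 2 = c ∧
    ![a,b,c,d,e] 3 = d ∧ ![a,b,c,d,e] 4 = e :=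
  ⟨rfl, rfl, rfl, rfl, rfl⟩

end helpers

set_option maxHeartbeats 2000000 in
/-- Let `I ⊆ ℝ` be an open interval and `y : I → ℝ` five times differentiable with
`y'' > 0` on `I`.  Then `y` satisfies the fifth-order ODE
`y⁽⁵⁾·(y'')² = −(40/9)·(y''')³ + 5·y''·y'''·y''''` on `I` if and only if its graph lies on
a conic: there are reals `c_1,…,c_6`, not all zero, with
`c_1·y² + c_2·x·y + c_3·x² + c_4·y + c_5·x + c_6 = 0` on `I`. -/
theorem ode_iff_graph_on_conic
    (I : Set ℝ) (hIopen : IsOpen I) (hIconn : I.OrdConnected)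
    (y : ℝ → ℝ)
    (hy : ∀ k < 5, ∀ x ∈ I, DifferentiableAt ℝ (iteratedDeriv k y) x)
    (hq : ∀ x ∈ I, 0 < iteratedDeriv 2 y x) :
    (∀ x ∈ I,
        iteratedDeriv 5 y x * (iteratedDeriv 2 y x) ^ 2 =
          -(40 / 9) * (iteratedDeriv 3 y x) ^ 3 +
            5 * iteratedDeriv 2 y x * iteratedDeriv 3 y x * iteratedDeriv 4 y x) ↔
    (∃ c : Fin 6 → ℝ, c ≠ 0 ∧ ∀ x ∈ I,
        c 0 * (y x) ^ 2 + c 1 * x * y x + c 2 * x ^ 2 + c 3 * y x + c 4 * x + c 5 = 0) := by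
  have hH : ∀ k, k < 5 → ∀ x ∈ I, HasDerivAt (iteratedDeriv k y) (iteratedDeriv (k+1) y x) x := by
    intro k hk x hx
    have h := (hy k hk x hx).hasDerivAt
    rwa [← iteratedDeriv_succ] at h
  have hH0 : ∀ x ∈ I, HasDerivAt y (iteratedDeriv 1 y x) x := by
    intro x hx
    have h := hH 0 (by norm_num) x hx
    rwa [iteratedDeriv_zero] at h
  have hH1 := hH 1 (by norm_num)
  have hH2 := hH 2 (by norm_num)
  have hH3 := hH 3 (by norm_num)
  have hH4 := hH 4 (by norm_num)
  constructor
  · intro hODE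
    by_cases hne : I.Nonempty
    swap
    · refine ⟨fun _ => 1, ?_, fun x hx => absurd ⟨x, hx⟩ hne⟩
      intro h; simpa using congrFun h 0
    obtain ⟨x₀, hx₀⟩ := hne
    obtain ⟨c, hc, hMc⟩ := conicAux_ker (Matrix.of ![
      ![(y x₀)^2, x₀*y x₀, x₀^2, y x₀, x₀, 1],
      ![2*y x₀*iteratedDeriv 1 y x₀, x₀*iteratedDeriv 1 y x₀ + y x₀, 2*x₀,
        iteratedDeriv 1 y x₀, 1, 0],
      ![2*y x₀*iteratedDeriv 2 y x₀ + 2*(iteratedDeriv 1 y x₀)^2,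
        x₀*iteratedDeriv 2 y x₀ + 2*iteratedDeriv 1 y x₀, 2, iteratedDeriv 2 y x₀, 0, 0],
      ![2*y x₀*iteratedDeriv 3 y x₀ + 6*iteratedDeriv 1 y x₀*iteratedDeriv 2 y x₀,
        x₀*iteratedDeriv 3 y x₀ + 3*iteratedDeriv 2 y x₀, 0, iteratedDeriv 3 y x₀, 0, 0],
      ![2*y x₀*iteratedDeriv 4 y x₀ + 8*iteratedDeriv 1 y x₀*iteratedDeriv 3 y x₀
          + 6*(iteratedDeriv 2 y x₀)^2,
        x₀*iteratedDeriv 4 y x₀ + 4*iteratedDeriv 3 y x₀, 0, iteratedDeriv 4 y x₀, 0, 0]])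
    refine ⟨c, hc, ?_⟩
    have hmv : ∀ i, (Matrix.of ![
      ![(y x₀)^2, x₀*y x₀, x₀^2, y x₀, x₀, 1],
      ![2*y x₀*iteratedDeriv 1 y x₀, x₀*iteratedDeriv 1 y x₀ + y x₀, 2*x₀,
        iteratedDeriv 1 y x₀, 1, 0],
      ![2*y x₀*iteratedDeriv 2 y x₀ + 2*(iteratedDeriv 1 y x₀)^2,
        x₀*iteratedDeriv 2 y x₀ + 2*iteratedDeriv 1 y x₀, 2, iteratedDeriv 2 y x₀, 0, 0],
      ![2*y x₀*iteratedDeriv 3 y x₀ + 6*iteratedDeriv 1 y x₀*iteratedDeriv 2 y x₀,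
        x₀*iteratedDeriv 3 y x₀ + 3*iteratedDeriv 2 y x₀, 0, iteratedDeriv 3 y x₀, 0, 0],
      ![2*y x₀*iteratedDeriv 4 y x₀ + 8*iteratedDeriv 1 y x₀*iteratedDeriv 3 y x₀
          + 6*(iteratedDeriv 2 y x₀)^2,
        x₀*iteratedDeriv 4 y x₀ + 4*iteratedDeriv 3 y x₀, 0, iteratedDeriv 4 y x₀, 0, 0]]).mulVec c i = 0 :=
      fun i => congrFun hMc i
    have i0 : c 0 * (y x₀)^2 + c 1 * x₀ * y x₀ + c 2 * x₀^2 + c 3 * y x₀ + c 4 * x₀ + c 5 = 0 := by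
      have h := hmv 0
      simp only [Matrix.mulVec, dotProduct, Fin.sum_univ_six, Matrix.of_apply,
          (conicAux_vec5 _ _ _ _ _).1, (conicAux_vec5 _ _ _ _ _).2.1,
          (conicAux_vec5 _ _ _ _ _).2.2.1, (conicAux_vec5 _ _ _ _ _).2.2.2.1,
          (conicAux_vec5 _ _ _ _ _).2.2.2.2,
          (conicAux_vec6 _ _ _ _ _ _).1, (conicAux_vec6 _ _ _ _ _ _).2.1,
          (conicAux_vec6 _ _ _ _ _ _).2.2.1, (conicAux_vec6 _ _ _ _ _ _).2.2.2.1,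
          (conicAux_vec6 _ _ _ _ _ _).2.2.2.2.1, (conicAux_vec6 _ _ _ _ _ _).2.2.2.2.2] at h
      linear_combination h
    have i1 : (2*c 0*y x₀ + c 1*x₀ + c 3) * iteratedDeriv 1 y x₀
        + (c 1 * y x₀ + 2*c 2*x₀ + c 4) = 0 := by
      have h := hmv 1
      simp only [Matrix.mulVec, dotProduct, Fin.sum_univ_six, Matrix.of_apply,
          (conicAux_vec5 _ _ _ _ _).1, (conicAux_vec5 _ _ _ _ _).2.1,
          (conicAux_vec5 _ _ _ _ _).2.2.1, (conicAux_vec5 _ _ _ _ _).2.2.2.1,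
          (conicAux_vec5 _ _ _ _ _).2.2.2.2,
          (conicAux_vec6 _ _ _ _ _ _).1, (conicAux_vec6 _ _ _ _ _ _).2.1,
          (conicAux_vec6 _ _ _ _ _ _).2.2.1, (conicAux_vec6 _ _ _ _ _ _).2.2.2.1,
          (conicAux_vec6 _ _ _ _ _ _).2.2.2.2.1, (conicAux_vec6 _ _ _ _ _ _).2.2.2.2.2] at h
      linear_combination h
    have i2 : (2*c 0*y x₀ + c 1*x₀ + c 3) * iteratedDeriv 2 y x₀
        + (2*c 0*(iteratedDeriv 1 y x₀)^2 + 2*c 1*iteratedDeriv 1 y x₀ + 2*c 2) = 0 := by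
      have h := hmv 2
      simp only [Matrix.mulVec, dotProduct, Fin.sum_univ_six, Matrix.of_apply,
          (conicAux_vec5 _ _ _ _ _).1, (conicAux_vec5 _ _ _ _ _).2.1,
          (conicAux_vec5 _ _ _ _ _).2.2.1, (conicAux_vec5 _ _ _ _ _).2.2.2.1,
          (conicAux_vec5 _ _ _ _ _).2.2.2.2,
          (conicAux_vec6 _ _ _ _ _ _).1, (conicAux_vec6 _ _ _ _ _ _).2.1,
          (conicAux_vec6 _ _ _ _ _ _).2.2.1, (conicAux_vec6 _ _ _ _ _ _).2.2.2.1,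
          (conicAux_vec6 _ _ _ _ _ _).2.2.2.2.1, (conicAux_vec6 _ _ _ _ _ _).2.2.2.2.2] at h
      linear_combination h
    have i3 : (2*c 0*y x₀ + c 1*x₀ + c 3) * iteratedDeriv 3 y x₀
        + 3*(2*c 0*iteratedDeriv 1 y x₀ + c 1) * iteratedDeriv 2 y x₀ = 0 := by
      have h := hmv 3
      simp only [Matrix.mulVec, dotProduct, Fin.sum_univ_six, Matrix.of_apply,
          (conicAux_vec5 _ _ _ _ _).1, (conicAux_vec5 _ _ _ _ _).2.1,
          (conicAux_vec5 _ _ _ _ _).2.2.1, (conicAux_vec5 _ _ _ _ _).2.2.2.1,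
          (conicAux_vec5 _ _ _ _ _).2.2.2.2,
          (conicAux_vec6 _ _ _ _ _ _).1, (conicAux_vec6 _ _ _ _ _ _).2.1,
          (conicAux_vec6 _ _ _ _ _ _).2.2.1, (conicAux_vec6 _ _ _ _ _ _).2.2.2.1,
          (conicAux_vec6 _ _ _ _ _ _).2.2.2.2.1, (conicAux_vec6 _ _ _ _ _ _).2.2.2.2.2] at h
      linear_combination h
    have i4 : (2*c 0*y x₀ + c 1*x₀ + c 3) * iteratedDeriv 4 y x₀
        + (4*(2*c 0*iteratedDeriv 1 y x₀ + c 1) * iteratedDeriv 3 y x₀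
          + 6*c 0*(iteratedDeriv 2 y x₀)^2) = 0 := by
      have h := hmv 4
      simp only [Matrix.mulVec, dotProduct, Fin.sum_univ_six, Matrix.of_apply,
          (conicAux_vec5 _ _ _ _ _).1, (conicAux_vec5 _ _ _ _ _).2.1,
          (conicAux_vec5 _ _ _ _ _).2.2.1, (conicAux_vec5 _ _ _ _ _).2.2.2.1,
          (conicAux_vec5 _ _ _ _ _).2.2.2.2,
          (conicAux_vec6 _ _ _ _ _ _).1, (conicAux_vec6 _ _ _ _ _ _).2.1,
          (conicAux_vec6 _ _ _ _ _ _).2.2.1, (conicAux_vec6 _ _ _ _ _ _).2.2.2.1,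
          (conicAux_vec6 _ _ _ _ _ _).2.2.2.2.1, (conicAux_vec6 _ _ _ _ _ _).2.2.2.2.2] at h
      linear_combination h
    have hconv : Convex ℝ I := convex_iff_ordConnected.mpr hIconn
    -- key propagation of P3 and P4
    have key : ∀ x ∈ I,
        ((2*c 0*y x + c 1*x + c 3) * iteratedDeriv 3 y x
          + 3*(2*c 0*iteratedDeriv 1 y x + c 1) * iteratedDeriv 2 y x = 0) ∧
        ((2*c 0*y x + c 1*x + c 3) * iteratedDeriv 4 y x
          + (4*(2*c 0*iteratedDeriv 1 y x + c 1) * iteratedDeriv 3 y x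
            + 6*c 0*(iteratedDeriv 2 y x)^2) = 0) := by
      intro x₁ hx₁
      have hminI : min x₀ x₁ ∈ I := by
        rcases min_choice x₀ x₁ with h | h <;> rw [h] <;> assumption
      have hmaxI : max x₀ x₁ ∈ I := by
        rcases max_choice x₀ x₁ with h | h <;> rw [h] <;> assumption
      obtain ⟨εa, hεa, hballa⟩ := Metric.isOpen_iff.mp hIopen _ hminI
      obtain ⟨εb, hεb, hballb⟩ := Metric.isOpen_iff.mp hIopen _ hmaxI
      set a := min x₀ x₁ - εa/2 with ha_def
      set b := max x₀ x₁ + εb/2 with hb_def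
      have haI : a ∈ I := by
        apply hballa
        rw [Metric.mem_ball, Real.dist_eq, ha_def, abs_of_nonpos (by linarith)]
        linarith
      have hbI : b ∈ I := by
        apply hballb
        rw [Metric.mem_ball, Real.dist_eq, hb_def, abs_of_nonneg (by linarith)]
        linarith
      have hab : Icc a b ⊆ I := hIconn.out haI hbI
      have hamin : a < min x₀ x₁ := by rw [ha_def]; linarith
      have hbmax : max x₀ x₁ < b := by rw [hb_def]; linarith
      have hx₀m : x₀ ∈ Ioo a b :=
        ⟨lt_of_lt_of_le hamin (min_le_left _ _), lt_of_le_of_lt (le_max_left _ _) hbmax⟩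
      have hx₁m : x₁ ∈ Ioo a b :=
        ⟨lt_of_lt_of_le hamin (min_le_right _ _), lt_of_le_of_lt (le_max_right _ _) hbmax⟩
      have hableq : a ≤ b := le_of_lt (lt_trans hx₀m.1 hx₀m.2)
      -- continuity of coefficients
      have hcont : ∀ k, 2 ≤ k → k < 5 → ContinuousOn (iteratedDeriv k y) (Icc a b) :=
        fun k _ hk z hz => ((hy k hk z (hab hz)).continuousAt).continuousWithinAt
      set lam : ℝ → ℝ := fun z =>
        (15*iteratedDeriv 2 y z*iteratedDeriv 4 y z - 40*(iteratedDeriv 3 y z)^2)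
          / (9*(iteratedDeriv 2 y z)^2) with hlam_def
      set mu : ℝ → ℝ := fun z => 10*iteratedDeriv 3 y z/(3*iteratedDeriv 2 y z) with hmu_def
      have hlamc : ContinuousOn lam (Icc a b) := by
        apply ContinuousOn.div
        · exact ((continuousOn_const.mul (hcont 2 le_rfl (by norm_num))).mul
            (hcont 4 (by norm_num) (by norm_num))).sub
            (continuousOn_const.mul ((hcont 3 (by norm_num) (by norm_num)).pow 2))
        · exact continuousOn_const.mul ((hcont 2 le_rfl (by norm_num)).pow 2)
        · intro z hz
          have := hq z (hab hz)
          positivity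
      have hmuc : ContinuousOn mu (Icc a b) := by
        apply ContinuousOn.div
        · exact continuousOn_const.mul (hcont 3 (by norm_num) (by norm_num))
        · exact continuousOn_const.mul (hcont 2 le_rfl (by norm_num))
        · intro z hz
          have := hq z (hab hz)
          positivity
      obtain ⟨C1, hC1⟩ := isCompact_Icc.exists_bound_of_continuousOn hlamc
      obtain ⟨C2, hC2⟩ := isCompact_Icc.exists_bound_of_continuousOn hmuc
      set Mb := max (max C1 C2) 0 with hMb_def
      have hMb0 : 0 ≤ Mb := le_max_right _ _
      set Lam : ℝ → ℝ := fun t => lam (max a (min t b)) with hLam_def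
      set Mu : ℝ → ℝ := fun t => mu (max a (min t b)) with hMu_def
      have hclamp : ∀ t, max a (min t b) ∈ Icc a b :=
        fun t => ⟨le_max_left _ _, max_le hableq (min_le_right _ _)⟩
      have hLamb : ∀ t, |Lam t| ≤ Mb := fun t => le_trans
        (by simpa [Real.norm_eq_abs] using hC1 _ (hclamp t))
        (le_max_of_le_left (le_max_left _ _))
      have hMub : ∀ t, |Mu t| ≤ Mb := fun t => le_trans
        (by simpa [Real.norm_eq_abs] using hC2 _ (hclamp t))
        (le_max_of_le_left (le_max_right _ _))
      set K : NNReal := Real.toNNReal (1 + 2*Mb) with hK_def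
      have hKcoe : (K : ℝ) = 1 + 2*Mb := Real.coe_toNNReal _ (by linarith)
      set v : ℝ → ℝ × ℝ → ℝ × ℝ := fun t p => (p.2, Lam t * p.1 + Mu t * p.2) with hv_def
      have hlip : ∀ t, LipschitzWith K (v t) := by
        intro t
        apply LipschitzWith.of_dist_le_mul
        intro p p'
        have hd1 : dist p.1 p'.1 ≤ dist p p' := by
          rw [Prod.dist_eq]; exact le_max_left _ _
        have hd2 : dist p.2 p'.2 ≤ dist p p' := by
          rw [Prod.dist_eq]; exact le_max_right _ _
        have hdn : (0:ℝ) ≤ dist p p' := dist_nonneg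
        rw [Prod.dist_eq]
        apply max_le
        · calc dist p.2 p'.2 ≤ 1 * dist p p' := by linarith
            _ ≤ K * dist p p' := by
              apply mul_le_mul_of_nonneg_right _ hdn
              rw [hKcoe]; linarith
        · rw [Real.dist_eq]
          have habs : |Lam t * p.1 + Mu t * p.2 - (Lam t * p'.1 + Mu t * p'.2)|
              ≤ |Lam t| * |p.1 - p'.1| + |Mu t| * |p.2 - p'.2| := by
            calc |Lam t * p.1 + Mu t * p.2 - (Lam t * p'.1 + Mu t * p'.2)|
                = |Lam t * (p.1 - p'.1) + Mu t * (p.2 - p'.2)| := by ring_nf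
              _ ≤ |Lam t * (p.1 - p'.1)| + |Mu t * (p.2 - p'.2)| := abs_add_le _ _
              _ = |Lam t| * |p.1 - p'.1| + |Mu t| * |p.2 - p'.2| := by
                  rw [abs_mul, abs_mul]
          have h1 : |p.1 - p'.1| ≤ dist p p' := by rw [← Real.dist_eq]; exact hd1
          have h2 : |p.2 - p'.2| ≤ dist p p' := by rw [← Real.dist_eq]; exact hd2
          have hL := hLamb t
          have hM := hMub t
          have e1 : |Lam t| * |p.1 - p'.1| ≤ Mb * dist p p' :=
            mul_le_mul hL h1 (abs_nonneg _) hMb0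
          have e2 : |Mu t| * |p.2 - p'.2| ≤ Mb * dist p p' :=
            mul_le_mul hM h2 (abs_nonneg _) hMb0
          calc |Lam t * p.1 + Mu t * p.2 - (Lam t * p'.1 + Mu t * p'.2)|
              ≤ Mb * dist p p' + Mb * dist p p' := by linarith
            _ ≤ K * dist p p' := by rw [hKcoe]; nlinarith
      set f : ℝ → ℝ × ℝ := fun z =>
        ((2*c 0*y z + c 1*z + c 3) * iteratedDeriv 3 y z
           + 3*(2*c 0*iteratedDeriv 1 y z + c 1) * iteratedDeriv 2 y z,
         (2*c 0*y z + c 1*z + c 3) * iteratedDeriv 4 y z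
           + (4*(2*c 0*iteratedDeriv 1 y z + c 1) * iteratedDeriv 3 y z
             + 6*c 0*(iteratedDeriv 2 y z)^2)) with hf_def
      have hfd : ∀ t ∈ Ioo a b, HasDerivAt f (v t (f t)) t ∧ f t ∈ univ := by
        intro t ht
        refine ⟨?_, trivial⟩
        have htI : t ∈ I := hab ⟨le_of_lt ht.1, le_of_lt ht.2⟩
        have hder : HasDerivAt f
            ((2*c 0*y t + c 1*t + c 3) * iteratedDeriv 4 y t
              + (4*(2*c 0*iteratedDeriv 1 y t + c 1) * iteratedDeriv 3 y t
                + 6*c 0*(iteratedDeriv 2 y t)^2),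
             (2*c 0*y t + c 1*t + c 3) * iteratedDeriv 5 y t
              + (5*(2*c 0*iteratedDeriv 1 y t + c 1) * iteratedDeriv 4 y t
                + 20*c 0*iteratedDeriv 2 y t*iteratedDeriv 3 y t)) t :=
          HasDerivAt.prodMk
            (conicAux_hdP3 _ _ _ (hH0 t htI) (hH1 t htI) (hH2 t htI) (hH3 t htI))
            (conicAux_hdP4 _ _ _ (hH0 t htI) (hH1 t htI) (hH2 t htI) (hH3 t htI) (hH4 t htI))
        have hclampt : max a (min t b) = t := by
          rw [min_eq_left (le_of_lt ht.2), max_eq_right (le_of_lt ht.1)]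
        have hq' := hq t htI
        have hODE' := hODE t htI
        have hsnd : (2*c 0*y t + c 1*t + c 3) * iteratedDeriv 5 y t
              + (5*(2*c 0*iteratedDeriv 1 y t + c 1) * iteratedDeriv 4 y t
                + 20*c 0*iteratedDeriv 2 y t*iteratedDeriv 3 y t)
            = Lam t * (f t).1 + Mu t * (f t).2 := by
          have hLt : Lam t = lam t := by simp only [hLam_def, hclampt]
          have hMt : Mu t = mu t := by simp only [hMu_def, hclampt]
          rw [hLt, hMt]
          simp only [hlam_def, hmu_def, hf_def]
          have hqne : iteratedDeriv 2 y t ≠ 0 := ne_of_gt hq'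
          field_simp
          linear_combination (27 * (2*c 0*y t + c 1*t + c 3)) * hODE'
        have hvt : v t (f t) = ((f t).2, Lam t * (f t).1 + Mu t * (f t).2) := by
          simp only [hv_def]
        rw [hvt, ← hsnd]
        simp only [hf_def]
        exact hder
      have hgd : ∀ t ∈ Ioo a b, HasDerivAt (fun _ : ℝ => ((0:ℝ),(0:ℝ))) (v t ((0:ℝ),(0:ℝ))) t
          ∧ ((0:ℝ),(0:ℝ)) ∈ univ := by
        intro t ht
        refine ⟨?_, trivial⟩
        have : v t ((0:ℝ),(0:ℝ)) = ((0:ℝ),(0:ℝ)) := by simp [hv_def]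
        rw [this]
        exact hasDerivAt_const t _
      have heq : f x₀ = ((0:ℝ),(0:ℝ)) := by
        rw [hf_def]
        simp only [Prod.mk.injEq]
        exact ⟨i3, i4⟩
      have huniq := ODE_solution_unique_of_mem_Ioo (s := fun _ => (univ : Set (ℝ × ℝ)))
        (fun t _ => (hlip t).lipschitzOnWith) hx₀m hfd hgd heq hx₁m
      have h1 := congrArg Prod.fst huniq
      have h2 := congrArg Prod.snd huniq
      rw [hf_def] at h1 h2
      exact ⟨h1, h2⟩
    -- propagate down to P0
    have hP3 : ∀ x ∈ I, (2*c 0*y x + c 1*x + c 3) * iteratedDeriv 3 y x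
        + 3*(2*c 0*iteratedDeriv 1 y x + c 1) * iteratedDeriv 2 y x = 0 :=
      fun x hx => (key x hx).1
    have hP2 : ∀ x ∈ I, (2*c 0*y x + c 1*x + c 3) * iteratedDeriv 2 y x
        + (2*c 0*(iteratedDeriv 1 y x)^2 + 2*c 1*iteratedDeriv 1 y x + 2*c 2) = 0 := by
      intro x hx
      have h := conicAux_const hconv
        (fun z hz => conicAux_hdP2 (c 0) (c 1) (c 2) (c 3) (hH0 z hz) (hH1 z hz) (hH2 z hz))
        hP3 hx₀ hx
      rw [h, i2]
    have hP1 : ∀ x ∈ I, (2*c 0*y x + c 1*x + c 3) * iteratedDeriv 1 y x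
        + (c 1 * y x + 2*c 2*x + c 4) = 0 := by
      intro x hx
      have h := conicAux_const hconv
        (fun z hz => conicAux_hdP1 (c 0) (c 1) (c 2) (c 3) (c 4) (hH0 z hz) (hH1 z hz))
        hP2 hx₀ hx
      rw [h, i1]
    intro x hx
    have h := conicAux_const hconv
      (fun z hz => conicAux_hdP0 (c 0) (c 1) (c 2) (c 3) (c 4) (c 5) (hH0 z hz))
      hP1 hx₀ hx
    rw [h, i0]
  · rintro ⟨c, hc, hcon⟩ x hx
    have E1 : ∀ z ∈ I, (2*c 0*y z + c 1*z + c 3) * iteratedDeriv 1 y z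
        + (c 1 * y z + 2*c 2*z + c 4) = 0 :=
      conicAux_deriv_zero hIopen hcon (fun z hz => conicAux_hdP0 _ _ _ _ _ _ (hH0 z hz))
    have E2 : ∀ z ∈ I, (2*c 0*y z + c 1*z + c 3) * iteratedDeriv 2 y z
        + (2*c 0*(iteratedDeriv 1 y z)^2 + 2*c 1*iteratedDeriv 1 y z + 2*c 2) = 0 :=
      conicAux_deriv_zero hIopen E1 (fun z hz => conicAux_hdP1 _ _ _ _ _ (hH0 z hz) (hH1 z hz))
    have E3 : ∀ z ∈ I, (2*c 0*y z + c 1*z + c 3) * iteratedDeriv 3 y z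
        + 3*(2*c 0*iteratedDeriv 1 y z + c 1) * iteratedDeriv 2 y z = 0 :=
      conicAux_deriv_zero hIopen E2
        (fun z hz => conicAux_hdP2 _ _ _ _ (hH0 z hz) (hH1 z hz) (hH2 z hz))
    have E4 : ∀ z ∈ I, (2*c 0*y z + c 1*z + c 3) * iteratedDeriv 4 y z
        + (4*(2*c 0*iteratedDeriv 1 y z + c 1) * iteratedDeriv 3 y z
          + 6*c 0*(iteratedDeriv 2 y z)^2) = 0 :=
      conicAux_deriv_zero hIopen E3
        (fun z hz => conicAux_hdP3 _ _ _ (hH0 z hz) (hH1 z hz) (hH2 z hz) (hH3 z hz))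
    have E5 : ∀ z ∈ I, (2*c 0*y z + c 1*z + c 3) * iteratedDeriv 5 y z
        + (5*(2*c 0*iteratedDeriv 1 y z + c 1) * iteratedDeriv 4 y z
          + 20*c 0*iteratedDeriv 2 y z*iteratedDeriv 3 y z) = 0 :=
      conicAux_deriv_zero hIopen E4
        (fun z hz => conicAux_hdP4 _ _ _ (hH0 z hz) (hH1 z hz) (hH2 z hz) (hH3 z hz) (hH4 z hz))
    have hqx := hq x hx
    have e3 := E3 x hx
    have e4 := E4 x hx
    have e5 := E5 x hx
    by_cases hA : 2*c 0*y x + c 1*x + c 3 = 0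
    · exfalso
      rw [hA] at e3 e4
      have hD : 2*c 0*iteratedDeriv 1 y x + c 1 = 0 := by
        rcases mul_eq_zero.mp (by linarith : (2*c 0*iteratedDeriv 1 y x + c 1)
            * iteratedDeriv 2 y x = 0) with h | h
        · exact h
        · exact absurd h (ne_of_gt hqx)
      have hc0 : c 0 = 0 := by
        have h6 : c 0 * (iteratedDeriv 2 y x)^2 = 0 := by rw [hD] at e4; linarith
        rcases mul_eq_zero.mp h6 with h | h
        · exact h
        · exact absurd h (pow_ne_zero 2 (ne_of_gt hqx))
      have hc1 : c 1 = 0 := by rw [hc0] at hD; linarith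
      have hc3 : c 3 = 0 := by rw [hc0, hc1] at hA; linarith
      have hc2 : c 2 = 0 := by
        have e2 := E2 x hx; rw [hA] at e2; rw [hc0, hc1] at e2; linarith
      have hc4 : c 4 = 0 := by
        have e1 := E1 x hx; rw [hA] at e1; rw [hc1, hc2] at e1; linarith
      have hc5 : c 5 = 0 := by
        have e0 := hcon x hx; rw [hc0, hc1, hc2, hc3, hc4] at e0; linarith
      exact hc (funext fun i => by fin_cases i <;> simpa)
    · have hr : iteratedDeriv 3 y x
          = -(3*(2*c 0*iteratedDeriv 1 y x + c 1)*iteratedDeriv 2 y x)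
            / (2*c 0*y x + c 1*x + c 3) := by
        rw [eq_div_iff hA]; linarith
      have hs : iteratedDeriv 4 y x
          = (-(4*(2*c 0*iteratedDeriv 1 y x + c 1)*iteratedDeriv 3 y x)
              - 6*c 0*(iteratedDeriv 2 y x)^2) / (2*c 0*y x + c 1*x + c 3) := by
        rw [eq_div_iff hA]; linarith
      have ht : iteratedDeriv 5 y x
          = (-(5*(2*c 0*iteratedDeriv 1 y x + c 1)*iteratedDeriv 4 y x)
              - 20*c 0*iteratedDeriv 2 y x*iteratedDeriv 3 y x)
            / (2*c 0*y x + c 1*x + c 3) := by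
        rw [eq_div_iff hA]; linarith
      rw [ht, hs, hr]
      field_simp
      ring
end

section
/- Every binary cubic p ∈ ℂ[x,y] (homogeneous of degree 3) that is squarefree, i.e., not divisible by the square of any linear form, can be written as p = u^3 + v^3 for some linearly independent linear forms u, v ∈ ℂ[x,y]. -/
open MvPolynomial

private lemma cube_sum' {R : Type*} [CommRing R] (w u v : R) (H : w^2 + w + 1 = 0) :
    u^3 + v^3 = (u+v) * (u+w*v) * (u+w^2*v) := by
  linear_combination (-(u^2*v) - w*u*v^2 - (w-1)*v^3) * H

private lemma key_ring' {R : Type*} [CommRing R] (w l t a b L₁ L₂ M₁ M₂ u v : R)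
    (hM₁ : M₁ = -(t*a*w^2) * L₁) (hM₂ : M₂ = -(t*b*w) * L₂)
    (hu : u = w*l*M₁ - l*M₂) (hv : v = l*M₂ - l*M₁)
    (Hω : w^2 + w + 1 = 0) (Hl : l*(w-1) = 1) (Ht : t^3*(a*b) = 1) :
    u^3 + v^3 = L₁ * L₂ * (a*L₁ + b*L₂) := by
  have h3 : w^3 = 1 := by linear_combination (w-1)*Hω
  have f1 : u + v = M₁ := by rw [hu, hv]; linear_combination M₁ * Hl
  have f2 : u + w*v = M₂ := by rw [hu, hv]; linear_combination M₂ * Hl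
  have f3 : u + w^2*v = -(w*M₁) - w^2*M₂ := by
    rw [hu, hv]; linear_combination (-(w*M₁) + (w+1)*M₂)*Hl + M₂*Hω
  rw [cube_sum' w u v Hω, f1, f2, f3, hM₁, hM₂]
  linear_combination (t^3*a*b*(w^3+1)*(L₁*L₂*(a*L₁+b*L₂)))*h3 + (L₁*L₂*(a*L₁+b*L₂))*Ht

private lemma fin2_monomial' (m : Fin 2 →₀ ℕ) (h : m 0 + m 1 = 3) :
    m = Finsupp.single 0 3 + Finsupp.single 1 0 ∨ m = Finsupp.single 0 2 + Finsupp.single 1 1 ∨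
    m = Finsupp.single 0 1 + Finsupp.single 1 2 ∨ m = Finsupp.single 0 0 + Finsupp.single 1 3 := by
  have h0 : m 0 ≤ 3 := by omega
  interval_cases hh : (m 0)
  · right; right; right
    ext i; fin_cases i <;> simp [Finsupp.single_apply] <;> omega
  · right; right; left
    ext i; fin_cases i <;> simp [Finsupp.single_apply] <;> omega
  · right; left
    ext i; fin_cases i <;> simp [Finsupp.single_apply] <;> omega
  · left
    ext i; fin_cases i <;> simp [Finsupp.single_apply] <;> omega

private lemma hom3_decomp' (p : MvPolynomial (Fin 2) ℂ) (hp : p.IsHomogeneous 3) :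
    p = C (p.coeff (Finsupp.single 0 3 + Finsupp.single 1 0)) * X 0 ^ 3 * X 1 ^ 0
      + C (p.coeff (Finsupp.single 0 2 + Finsupp.single 1 1)) * X 0 ^ 2 * X 1 ^ 1
      + C (p.coeff (Finsupp.single 0 1 + Finsupp.single 1 2)) * X 0 ^ 1 * X 1 ^ 2
      + C (p.coeff (Finsupp.single 0 0 + Finsupp.single 1 3)) * X 0 ^ 0 * X 1 ^ 3 := by
  have key : ∀ (a : ℂ) (i j : ℕ),
      (C a * X 0 ^ i * X 1 ^ j : MvPolynomial (Fin 2) ℂ)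
        = monomial (Finsupp.single 0 i + Finsupp.single 1 j) a := by
    intro a i j
    rw [X_pow_eq_monomial, X_pow_eq_monomial, C_apply, monomial_mul, monomial_mul]
    simp
  rw [key, key, key, key]
  apply MvPolynomial.ext
  intro m
  simp only [coeff_add, coeff_monomial]
  by_cases hm : m 0 + m 1 = 3
  · rcases fin2_monomial' m hm with h | h | h | h <;> subst h <;>
      norm_num [Finsupp.ext_iff, Fin.forall_fin_two, Finsupp.add_apply, Finsupp.single_apply]
  · have hz : p.coeff m = 0 := by
      have hdeg : m.degree = m 0 + m 1 := by
        rw [Finsupp.degree_apply, Finset.sum_subset (Finset.subset_univ _)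
          (fun x _ hx => Finsupp.notMem_support_iff.mp hx)]
        exact Fin.sum_univ_two m
      exact hp.coeff_eq_zero (by rw [hdeg]; exact hm)
    rw [hz]
    have hfalse : ∀ i j : ℕ, (Finsupp.single (0 : Fin 2) i + Finsupp.single 1 j = m) →
        i + j = 3 → False := by
      intro i j hij hs
      apply hm
      rw [← hij]
      simp [Finsupp.add_apply, Finsupp.single_apply, hs]
    rw [if_neg (fun h => hfalse 3 0 h (by norm_num)), if_neg (fun h => hfalse 2 1 h (by norm_num)),
      if_neg (fun h => hfalse 1 2 h (by norm_num)), if_neg (fun h => hfalse 0 3 h (by norm_num))]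
    norm_num

private lemma lin_hom' (s t : ℂ) :
    (C s * X 0 + C t * X 1 : MvPolynomial (Fin 2) ℂ).IsHomogeneous 1 := by
  apply MvPolynomial.IsHomogeneous.add
  · simpa using (isHomogeneous_C (Fin 2) s).mul (isHomogeneous_X ℂ 0)
  · simpa using (isHomogeneous_C (Fin 2) t).mul (isHomogeneous_X ℂ 1)

private lemma lin_coeff0' (s t : ℂ) :
    (C s * X 0 + C t * X 1 : MvPolynomial (Fin 2) ℂ).coeff (Finsupp.single 0 1) = s := by
  simp [coeff_add, coeff_C_mul, coeff_X', Finsupp.single_left_inj]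

private lemma lin_coeff1' (s t : ℂ) :
    (C s * X 0 + C t * X 1 : MvPolynomial (Fin 2) ℂ).coeff (Finsupp.single 1 1) = t := by
  simp [coeff_add, coeff_C_mul, coeff_X', Finsupp.single_left_inj]

private lemma lin_ne_zero' (s t : ℂ) (h : s ≠ 0 ∨ t ≠ 0) :
    (C s * X 0 + C t * X 1 : MvPolynomial (Fin 2) ℂ) ≠ 0 := by
  intro hz
  rcases h with h | h
  · exact h (by rw [← lin_coeff0' s t, hz]; simp)
  · exact h (by rw [← lin_coeff1' s t, hz]; simp)

private lemma lin_indep' (s₁ t₁ s₂ t₂ : ℂ) (h : s₁*t₂ - s₂*t₁ ≠ 0) :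
    LinearIndependent ℂ ![(C s₁ * X 0 + C t₁ * X 1 : MvPolynomial (Fin 2) ℂ),
      C s₂ * X 0 + C t₂ * X 1] := by
  rw [LinearIndependent.pair_iff]
  intro c d hcd
  have h0 := congrArg (fun q => MvPolynomial.coeff (Finsupp.single 0 1) q) hcd
  have h1 := congrArg (fun q => MvPolynomial.coeff (Finsupp.single 1 1) q) hcd
  simp [smul_eq_C_mul, coeff_add, coeff_C_mul, coeff_X', coeff_zero,
    Finsupp.single_eq_single_iff] at h0 h1
  constructor
  · have hc : c * (s₁*t₂ - s₂*t₁) = 0 := by linear_combination t₂*h0 - s₂*h1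
    exact (mul_eq_zero.mp hc).resolve_right h
  · have hd : d * (s₁*t₂ - s₂*t₁) = 0 := by linear_combination s₁*h1 - t₁*h0
    exact (mul_eq_zero.mp hd).resolve_right h

private lemma exists_factorization'
    (p : MvPolynomial (Fin 2) ℂ) (hp : p.IsHomogeneous 3)
    (hsf : ∀ ℓ : MvPolynomial (Fin 2) ℂ, ℓ.IsHomogeneous 1 → ℓ ≠ 0 → ¬ (ℓ ^ 2 ∣ p)) :
    ∃ s₁ t₁ s₂ t₂ s₃ t₃ : ℂ,
      s₁*t₂ - s₂*t₁ ≠ 0 ∧ s₃*t₂ - s₂*t₃ ≠ 0 ∧ s₁*t₃ - s₃*t₁ ≠ 0 ∧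
      p = (C s₁ * X 0 + C t₁ * X 1) *
        ((C s₂ * X 0 + C t₂ * X 1) * (C s₃ * X 0 + C t₃ * X 1)) := by
  have hdec := hom3_decomp' p hp
  set a3 := p.coeff (Finsupp.single 0 3 + Finsupp.single 1 0) with ha3d
  set a2 := p.coeff (Finsupp.single 0 2 + Finsupp.single 1 1) with ha2d
  set a1 := p.coeff (Finsupp.single 0 1 + Finsupp.single 1 2) with ha1d
  set a0 := p.coeff (Finsupp.single 0 0 + Finsupp.single 1 3) with ha0d
  by_cases h3 : a3 = 0
  · by_cases h2 : a2 = 0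
    · -- X 1 ^ 2 divides p : contradiction
      exfalso
      apply hsf (C 0 * X 0 + C 1 * X 1) (lin_hom' 0 1)
        (lin_ne_zero' 0 1 (Or.inr one_ne_zero))
      refine ⟨C a1 * X 0 + C a0 * X 1, ?_⟩
      rw [hdec, h3, h2]
      simp only [map_zero, map_one]
      ring
    · -- quadratic case
      set q : Polynomial ℂ := Polynomial.X^2 + Polynomial.C (a1/a2) * Polynomial.X
        + Polynomial.C (a0/a2) with hqdef
      have hmonic : q.Monic := by rw [hqdef]; monicity!
      have hdeg : q.natDegree = 2 := by rw [hqdef]; compute_degree!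
      have hsplits : q.Splits := IsAlgClosed.splits q
      have hcard : q.roots.card = 2 := by
        rw [Polynomial.splits_iff_card_roots.mp hsplits, hdeg]
      obtain ⟨r₁, r₂, hr⟩ := Multiset.card_eq_two.mp hcard
      have hq : q = (Polynomial.X - Polynomial.C r₁) * (Polynomial.X - Polynomial.C r₂) := by
        have h2' := hsplits.eq_prod_roots_of_monic hmonic
        rw [hr] at h2'
        simpa using h2'
      rw [hqdef] at hq
      have E0 := congrArg (Polynomial.eval 0) hq
      have E1 := congrArg (Polynomial.eval 1) hq
      simp only [Polynomial.eval_add, Polynomial.eval_mul, Polynomial.eval_pow,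
        Polynomial.eval_X, Polynomial.eval_C, Polynomial.eval_sub, Polynomial.eval_one] at E0 E1
      have ha0' : a0 = a2 * (r₁ * r₂) := by
        field_simp [h2] at E0
        linear_combination E0
      have ha1' : a1 = -(a2 * (r₁ + r₂)) := by
        field_simp [h2] at E1
        linear_combination E1 - ha0'
      have hne : r₁ ≠ r₂ := by
        intro he
        apply hsf (C 1 * X 0 + C (-r₁) * X 1) (lin_hom' _ _)
          (lin_ne_zero' _ _ (Or.inl one_ne_zero))
        refine ⟨C a2 * X 1, ?_⟩
        rw [hdec, h3, ha1', ha0', ← he]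
        simp only [map_zero, map_one, map_neg, map_mul, map_add]
        ring
      refine ⟨0, a2, 1, -r₁, 1, -r₂, ?_, ?_, ?_, ?_⟩
      · have e : (0:ℂ)*(-r₁) - 1*a2 = -a2 := by ring
        rw [e, neg_ne_zero]; exact h2
      · have e : (1:ℂ)*(-r₁) - 1*(-r₂) = r₂ - r₁ := by ring
        rw [e]; exact sub_ne_zero.mpr (Ne.symm hne)
      · have e : (0:ℂ)*(-r₂) - 1*a2 = -a2 := by ring
        rw [e, neg_ne_zero]; exact h2
      · rw [hdec, h3, ha1', ha0']
        simp only [map_zero, map_one, map_neg, map_mul, map_add]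
        ring
  · -- cubic case
    set q : Polynomial ℂ := Polynomial.X^3 + Polynomial.C (a2/a3) * Polynomial.X^2
      + Polynomial.C (a1/a3) * Polynomial.X + Polynomial.C (a0/a3) with hqdef
    have hmonic : q.Monic := by rw [hqdef]; monicity!
    have hdeg : q.natDegree = 3 := by rw [hqdef]; compute_degree!
    have hsplits : q.Splits := IsAlgClosed.splits q
    have hcard : q.roots.card = 3 := by
      rw [Polynomial.splits_iff_card_roots.mp hsplits, hdeg]
    obtain ⟨r₁, r₂, r₃, hr⟩ := Multiset.card_eq_three.mp hcard
    have hq : q = (Polynomial.X - Polynomial.C r₁) *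
        ((Polynomial.X - Polynomial.C r₂) * (Polynomial.X - Polynomial.C r₃)) := by
      have h2' := hsplits.eq_prod_roots_of_monic hmonic
      rw [hr] at h2'
      simpa [mul_assoc] using h2'
    rw [hqdef] at hq
    have E0 := congrArg (Polynomial.eval 0) hq
    have E1 := congrArg (Polynomial.eval 1) hq
    have E2 := congrArg (Polynomial.eval (-1)) hq
    simp only [Polynomial.eval_add, Polynomial.eval_mul, Polynomial.eval_pow,
      Polynomial.eval_X, Polynomial.eval_C, Polynomial.eval_sub, Polynomial.eval_one] at E0 E1 E2
    have hA : a2/a3 = -(r₁+r₂+r₃) := by linear_combination E1/2 + E2/2 - E0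
    have hB : a1/a3 = r₁*r₂+r₁*r₃+r₂*r₃ := by linear_combination E1/2 - E2/2
    have hC : a0/a3 = -(r₁*r₂*r₃) := by linear_combination E0
    rw [div_eq_iff h3] at hA hB hC
    have ha2' : a2 = -(a3*(r₁+r₂+r₃)) := by linear_combination hA
    have ha1' : a1 = a3*(r₁*r₂+r₁*r₃+r₂*r₃) := by linear_combination hB
    have ha0' : a0 = -(a3*(r₁*r₂*r₃)) := by linear_combination hC
    have hne12 : r₁ ≠ r₂ := by
      intro he
      apply hsf (C 1 * X 0 + C (-r₁) * X 1) (lin_hom' _ _)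
        (lin_ne_zero' _ _ (Or.inl one_ne_zero))
      refine ⟨C a3 * (C 1 * X 0 + C (-r₃) * X 1), ?_⟩
      rw [hdec, ha2', ha1', ha0', ← he]
      simp only [map_zero, map_one, map_neg, map_mul, map_add]
      ring
    have hne13 : r₁ ≠ r₃ := by
      intro he
      apply hsf (C 1 * X 0 + C (-r₁) * X 1) (lin_hom' _ _)
        (lin_ne_zero' _ _ (Or.inl one_ne_zero))
      refine ⟨C a3 * (C 1 * X 0 + C (-r₂) * X 1), ?_⟩
      rw [hdec, ha2', ha1', ha0', ← he]
      simp only [map_zero, map_one, map_neg, map_mul, map_add]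
      ring
    have hne23 : r₂ ≠ r₃ := by
      intro he
      apply hsf (C 1 * X 0 + C (-r₂) * X 1) (lin_hom' _ _)
        (lin_ne_zero' _ _ (Or.inl one_ne_zero))
      refine ⟨C a3 * (C 1 * X 0 + C (-r₁) * X 1), ?_⟩
      rw [hdec, ha2', ha1', ha0', ← he]
      simp only [map_zero, map_one, map_neg, map_mul, map_add]
      ring
    refine ⟨a3, -(a3*r₁), 1, -r₂, 1, -r₃, ?_, ?_, ?_, ?_⟩
    · have e : a3*(-r₂) - 1*(-(a3*r₁)) = a3*(r₁-r₂) := by ring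
      rw [e]; exact mul_ne_zero h3 (sub_ne_zero.mpr hne12)
    · have e : (1:ℂ)*(-r₂) - 1*(-r₃) = r₃ - r₂ := by ring
      rw [e]; exact sub_ne_zero.mpr (Ne.symm hne23)
    · have e : a3*(-r₃) - 1*(-(a3*r₁)) = a3*(r₁-r₃) := by ring
      rw [e]; exact mul_ne_zero h3 (sub_ne_zero.mpr hne13)
    · rw [hdec, ha2', ha1', ha0']
      simp only [map_zero, map_one, map_neg, map_mul, map_add]
      ring

/-- Every squarefree binary cubic (a homogeneous polynomial of degree 3 in `ℂ[x,y]` not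
divisible by the square of any nonzero linear form) is a sum of two cubes of linearly
independent linear forms. -/
theorem squarefree_cubic_sum_of_two_cubes
    (p : MvPolynomial (Fin 2) ℂ) (hp : p.IsHomogeneous 3)
    (hsf : ∀ ℓ : MvPolynomial (Fin 2) ℂ, ℓ.IsHomogeneous 1 → ℓ ≠ 0 → ¬ (ℓ ^ 2 ∣ p)) :
    ∃ u v : MvPolynomial (Fin 2) ℂ,
      u.IsHomogeneous 1 ∧ v.IsHomogeneous 1 ∧
      LinearIndependent ℂ ![u, v] ∧ p = u ^ 3 + v ^ 3 := by
  obtain ⟨s₁, t₁, s₂, t₂, s₃, t₃, hD, hE, hF, hpfac⟩ := exists_factorization' p hp hsf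
  -- the root of unity
  obtain ⟨ω, hω⟩ : ∃ w : ℂ, w^2 + w + 1 = 0 := by
    have hd : (Polynomial.X^2 + Polynomial.X + 1 : Polynomial ℂ).degree = 2 := by
      compute_degree!
    obtain ⟨w, hw⟩ := IsAlgClosed.exists_root (k := ℂ) (Polynomial.X^2 + Polynomial.X + 1)
      (by rw [hd]; norm_num)
    refine ⟨w, by simpa [Polynomial.IsRoot] using hw⟩
  have hω1 : ω ≠ 1 := by intro h; rw [h] at hω; norm_num at hω
  set D := s₁*t₂ - s₂*t₁ with hDdef
  set a := (s₃*t₂ - s₂*t₃)/D with hadef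
  set b := (s₁*t₃ - s₃*t₁)/D with hbdef
  have ha : a ≠ 0 := div_ne_zero hE hD
  have hb : b ≠ 0 := div_ne_zero hF hD
  have hs3 : s₃ = a*s₁ + b*s₂ := by rw [hadef, hbdef, hDdef, div_mul_eq_mul_div, div_mul_eq_mul_div, ← add_div, eq_div_iff (show s₁*t₂ - s₂*t₁ ≠ 0 from hD)]; ring
  have ht3 : t₃ = a*t₁ + b*t₂ := by rw [hadef, hbdef, hDdef, div_mul_eq_mul_div, div_mul_eq_mul_div, ← add_div, eq_div_iff (show s₁*t₂ - s₂*t₁ ≠ 0 from hD)]; ring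
  set l := (ω-1)⁻¹ with hldef
  have hl : l*(ω-1) = 1 := inv_mul_cancel₀ (sub_ne_zero.mpr hω1)
  have hl0 : l ≠ 0 := left_ne_zero_of_mul_eq_one hl
  obtain ⟨t, ht⟩ : ∃ z : ℂ, z ^ 3 = (a*b)⁻¹ := IsAlgClosed.exists_pow_nat_eq _ (by norm_num)
  have habt : t^3*(a*b) = 1 := by rw [ht]; field_simp
  have ht0 : t ≠ 0 := by
    intro h; rw [h] at habt; norm_num at habt
  have hω0 : ω ≠ 0 := by intro h; rw [h] at hω; norm_num at hω
  -- coordinates of u and v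
  set c₁ := -(t*a*ω^2) with hc₁
  set c₂ := -(t*b*ω) with hc₂
  set α := ω*l*c₁*s₁ - l*c₂*s₂ with hα
  set β := ω*l*c₁*t₁ - l*c₂*t₂ with hβ
  set γ := l*c₂*s₂ - l*c₁*s₁ with hγ
  set δ := l*c₂*t₂ - l*c₁*t₁ with hδ
  have hdet : α*δ - γ*β ≠ 0 := by
    have e : α*δ - γ*β = l*(t*a*ω^2)*(t*b*ω)*(s₁*t₂-s₂*t₁) := by
      rw [hα, hβ, hγ, hδ, hc₁, hc₂]
      linear_combination (l*(t*a*ω^2)*(t*b*ω)*(s₁*t₂-s₂*t₁))*hl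
    rw [e]
    exact mul_ne_zero (mul_ne_zero (mul_ne_zero hl0
      (mul_ne_zero (mul_ne_zero ht0 ha) (pow_ne_zero 2 hω0)))
      (mul_ne_zero (mul_ne_zero ht0 hb) hω0)) hD
  refine ⟨C α * X 0 + C β * X 1, C γ * X 0 + C δ * X 1, lin_hom' α β, lin_hom' γ δ,
    lin_indep' α β γ δ hdet, ?_⟩
  -- transfer the scalar identities into the polynomial ring
  have Hω : (C ω : MvPolynomial (Fin 2) ℂ)^2 + C ω + 1 = 0 := by
    have h := congrArg (⇑(C : ℂ →+* MvPolynomial (Fin 2) ℂ)) hω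
    simpa only [map_add, map_pow, map_one, map_zero] using h
  have HCl : (C l : MvPolynomial (Fin 2) ℂ) * (C ω - 1) = 1 := by
    have h := congrArg (⇑(C : ℂ →+* MvPolynomial (Fin 2) ℂ)) hl
    simpa only [map_mul, map_sub, map_one] using h
  have HCt : (C t : MvPolynomial (Fin 2) ℂ)^3 * (C a * C b) = 1 := by
    have h := congrArg (⇑(C : ℂ →+* MvPolynomial (Fin 2) ℂ)) habt
    simpa only [map_mul, map_pow, map_one] using h
  have main := key_ring' (C ω) (C l) (C t) (C a) (C b)
    (C s₁ * X 0 + C t₁ * X 1) (C s₂ * X 0 + C t₂ * X 1)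
    (-(C t * C a * (C ω)^2) * (C s₁ * X 0 + C t₁ * X 1))
    (-(C t * C b * C ω) * (C s₂ * X 0 + C t₂ * X 1))
    (C ω * C l * (-(C t * C a * (C ω)^2) * (C s₁ * X 0 + C t₁ * X 1))
      - C l * (-(C t * C b * C ω) * (C s₂ * X 0 + C t₂ * X 1)))
    (C l * (-(C t * C b * C ω) * (C s₂ * X 0 + C t₂ * X 1))
      - C l * (-(C t * C a * (C ω)^2) * (C s₁ * X 0 + C t₁ * X 1)))
    rfl rfl rfl rfl Hω HCl HCt
  have hu_eq : C ω * C l * (-(C t * C a * (C ω)^2) * (C s₁ * X 0 + C t₁ * X 1))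
      - C l * (-(C t * C b * C ω) * (C s₂ * X 0 + C t₂ * X 1))
      = (C α * X 0 + C β * X 1 : MvPolynomial (Fin 2) ℂ) := by
    rw [hα, hβ, hc₁, hc₂]
    simp only [map_mul, map_sub, map_neg, map_pow]
    ring
  have hv_eq : C l * (-(C t * C b * C ω) * (C s₂ * X 0 + C t₂ * X 1))
      - C l * (-(C t * C a * (C ω)^2) * (C s₁ * X 0 + C t₁ * X 1))
      = (C γ * X 0 + C δ * X 1 : MvPolynomial (Fin 2) ℂ) := by
    rw [hγ, hδ, hc₁, hc₂]
    simp only [map_mul, map_sub, map_neg, map_pow]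
    ring
  rw [← hu_eq, ← hv_eq, main, hpfac]
  have HL3 : (C s₃ * X 0 + C t₃ * X 1 : MvPolynomial (Fin 2) ℂ)
      = C a * (C s₁ * X 0 + C t₁ * X 1) + C b * (C s₂ * X 0 + C t₂ * X 1) := by
    rw [hs3, ht3]
    simp only [map_add, map_mul]
    ring
  rw [HL3]
  ring
end

section
/- Let u, v be linearly independent linear forms in ℂ[x,y] and let w, k be linearly independent linear forms in ℂ[x,y]. If u^3 + v^3 = w^3 + k^3, then either (w, k) = (ζ·u, ζ'·v) or (w, k) = (ζ·v, ζ'·u) for some cube roots of unity ζ, ζ' ∈ ℂ. In particular, the unordered pair of projective points {[u], [v]} ∈ ℙ(ℂ^2) determined by a decomposition of a binary cubic as a sum of two cubes of independent linear forms is unique: every point of ℂP^3 = ℙ(Sym^3(ℂ^2)) off the tangent surface of the rational normal curve lies on a unique secant of that curve. -/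
set_option maxHeartbeats 1000000

open MvPolynomial

lemma homog_one_decomp (p : MvPolynomial (Fin 2) ℂ) (hp : p.IsHomogeneous 1) :
    p = C (coeff (Finsupp.single 0 1) p) * X 0 + C (coeff (Finsupp.single 1 1) p) * X 1 := by
  have hmon : ∀ (i : Fin 2) (a : ℂ), C a * X i = monomial (Finsupp.single i 1) a := by
    intro i a
    rw [X, C_mul_monomial, mul_one]
  ext d
  rw [coeff_add, hmon, hmon, coeff_monomial, coeff_monomial]
  by_cases h0 : Finsupp.single (0 : Fin 2) 1 = d
  · simp [h0.symm, Finsupp.single_eq_single_iff]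
  by_cases h1 : Finsupp.single (1 : Fin 2) 1 = d
  · simp [h1.symm, Finsupp.single_eq_single_iff]
  simp only [h0, h1, if_false, add_zero]
  apply hp.coeff_eq_zero
  intro hd
  have hsum : d 0 + d 1 = 1 := by
    have : d.degree = d 0 + d 1 := by
      rw [Finsupp.degree_apply]
      rw [Finset.sum_subset (Finset.subset_univ d.support)]
      · simp [Fin.sum_univ_two]
      · intro x _ hx; exact Finsupp.notMem_support_iff.mp hx
    omega
  have hcase : d 0 = 0 ∧ d 1 = 1 ∨ d 0 = 1 ∧ d 1 = 0 := by omega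
  rcases hcase with ⟨h01, h11⟩ | ⟨h01, h11⟩
  · exact h1 (Finsupp.ext fun i => by fin_cases i <;> simp [h01, h11]).symm
  · exact h0 (Finsupp.ext fun i => by fin_cases i <;> simp [h01, h11]).symm

lemma scalar_key (a₁ a₂ b₁ b₂ c₁ c₂ d₁ d₂ : ℂ)
    (hA : a₁ * b₂ - a₂ * b₁ ≠ 0) (hC : c₁ * d₂ - c₂ * d₁ ≠ 0)
    (E : ∀ s t : ℂ, (a₁*s + a₂*t)^3 + (b₁*s + b₂*t)^3 = (c₁*s + c₂*t)^3 + (d₁*s + d₂*t)^3) :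
    ∃ ζ ζ' : ℂ, ζ^3 = 1 ∧ ζ'^3 = 1 ∧
      ((c₁ = ζ*a₁ ∧ c₂ = ζ*a₂ ∧ d₁ = ζ'*b₁ ∧ d₂ = ζ'*b₂) ∨
       (c₁ = ζ*b₁ ∧ c₂ = ζ*b₂ ∧ d₁ = ζ'*a₁ ∧ d₂ = ζ'*a₂)) := by
  set Δ : ℂ := a₁ * b₂ - a₂ * b₁ with hΔ
  set α : ℂ := (c₁*b₂ - c₂*b₁)/Δ with hα
  set β : ℂ := (c₂*a₁ - c₁*a₂)/Δ with hβ
  set γ : ℂ := (d₁*b₂ - d₂*b₁)/Δ with hγ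
  set δ : ℂ := (d₂*a₁ - d₁*a₂)/Δ with hδ
  have hc₁ : c₁ = α*a₁ + β*b₁ := by rw [hα, hβ]; field_simp; ring
  have hc₂ : c₂ = α*a₂ + β*b₂ := by rw [hα, hβ]; field_simp; ring
  have hd₁ : d₁ = γ*a₁ + δ*b₁ := by rw [hγ, hδ]; field_simp; ring
  have hd₂ : d₂ = γ*a₂ + δ*b₂ := by rw [hγ, hδ]; field_simp; ring
  have hdet : α*δ - β*γ ≠ 0 := by
    have h : (α*δ - β*γ) * Δ = c₁*d₂ - c₂*d₁ := by
      rw [hα, hβ, hγ, hδ]; field_simp; ring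
    intro h0
    apply hC; rw [← h, h0, zero_mul]
  have hu1 : a₁*(b₂/Δ) + a₂*(-b₁/Δ) = 1 := by field_simp; ring
  have hv1 : b₁*(b₂/Δ) + b₂*(-b₁/Δ) = 0 := by field_simp; ring
  have hw1 : c₁*(b₂/Δ) + c₂*(-b₁/Δ) = α := by rw [hα]; field_simp; ring
  have hk1 : d₁*(b₂/Δ) + d₂*(-b₁/Δ) = γ := by rw [hγ]; field_simp; ring
  have e1 := E (b₂/Δ) (-b₁/Δ)
  rw [hu1, hv1, hw1, hk1] at e1
  have hu2 : a₁*(-a₂/Δ) + a₂*(a₁/Δ) = 0 := by field_simp; ring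
  have hv2 : b₁*(-a₂/Δ) + b₂*(a₁/Δ) = 1 := by field_simp; ring
  have hw2 : c₁*(-a₂/Δ) + c₂*(a₁/Δ) = β := by rw [hβ]; field_simp; ring
  have hk2 : d₁*(-a₂/Δ) + d₂*(a₁/Δ) = δ := by rw [hδ]; field_simp; ring
  have e2 := E (-a₂/Δ) (a₁/Δ)
  rw [hu2, hv2, hw2, hk2] at e2
  have hu3 : a₁*((b₂-a₂)/Δ) + a₂*((a₁-b₁)/Δ) = 1 := by field_simp; ring
  have hv3 : b₁*((b₂-a₂)/Δ) + b₂*((a₁-b₁)/Δ) = 1 := by field_simp; ring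
  have hw3 : c₁*((b₂-a₂)/Δ) + c₂*((a₁-b₁)/Δ) = α + β := by rw [hα, hβ]; field_simp; ring
  have hk3 : d₁*((b₂-a₂)/Δ) + d₂*((a₁-b₁)/Δ) = γ + δ := by rw [hγ, hδ]; field_simp; ring
  have e3 := E ((b₂-a₂)/Δ) ((a₁-b₁)/Δ)
  rw [hu3, hv3, hw3, hk3] at e3
  have hu4 : a₁*((b₂+a₂)/Δ) + a₂*((-a₁-b₁)/Δ) = 1 := by field_simp; ring
  have hv4 : b₁*((b₂+a₂)/Δ) + b₂*((-a₁-b₁)/Δ) = -1 := by field_simp; ring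
  have hw4 : c₁*((b₂+a₂)/Δ) + c₂*((-a₁-b₁)/Δ) = α - β := by rw [hα, hβ]; field_simp; ring
  have hk4 : d₁*((b₂+a₂)/Δ) + d₂*((-a₁-b₁)/Δ) = γ - δ := by rw [hγ, hδ]; field_simp; ring
  have e4 := E ((b₂+a₂)/Δ) ((-a₁-b₁)/Δ)
  rw [hu4, hv4, hw4, hk4] at e4
  have q1 : α^3 + γ^3 = 1 := by linear_combination -e1
  have q2 : β^3 + δ^3 = 1 := by linear_combination -e2
  have q3 : α^2*β + γ^2*δ = 0 := by linear_combination -e3/6 + e4/6 - q2/3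
  have q4 : α*β^2 + γ*δ^2 = 0 := by linear_combination -e3/6 - e4/6 - q1/3
  by_cases hα0 : α = 0
  · have hγ0 : γ ≠ 0 := by
      intro h; rw [hα0, h] at q1; simp at q1
    have hδ0 : δ = 0 := by
      have := q3; rw [hα0] at this; simp at this
      rcases this with h | h
      · exact absurd h hγ0
      · exact h
    refine ⟨β, γ, ?_, ?_, Or.inr ⟨?_, ?_, ?_, ?_⟩⟩
    · linear_combination q2 - (δ^2 : ℂ) * hδ0
    · linear_combination q1 - (α^2 : ℂ) * hα0
    · rw [hc₁, hα0]; ring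
    · rw [hc₂, hα0]; ring
    · rw [hd₁, hδ0]; ring
    · rw [hd₂, hδ0]; ring
  · by_cases hβ0 : β = 0
    · have hγ0 : γ = 0 := by
        by_contra hγ0
        have hδ0 : δ = 0 := by
          have := q3; rw [hβ0] at this; simp at this
          rcases this with h | h
          · exact absurd h hγ0
          · exact h
        rw [hβ0, hδ0] at q2; simp at q2
      refine ⟨α, δ, ?_, ?_, Or.inl ⟨?_, ?_, ?_, ?_⟩⟩
      · linear_combination q1 - (γ^2 : ℂ) * hγ0
      · linear_combination q2 - (β^2 : ℂ) * hβ0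
      · rw [hc₁, hβ0]; ring
      · rw [hc₂, hβ0]; ring
      · rw [hd₁, hγ0]; ring
      · rw [hd₂, hγ0]; ring
    · exfalso
      have hγ0 : γ ≠ 0 := by
        intro h
        rw [h] at q3; simp at q3
        rcases q3 with h' | h'
        · exact hα0 h'
        · exact hβ0 h'
      have hδ0 : δ ≠ 0 := by
        intro h
        rw [h] at q4; simp at q4
        rcases q4 with h' | h'
        · exact hα0 h'
        · exact hβ0 h'
      apply hdet
      have key : α * (α*δ - β*γ) * (β * δ) = 0 := by
        linear_combination δ^2 * q3 - γ*δ * q4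
      rcases mul_eq_zero.mp key with h | h
      · rcases mul_eq_zero.mp h with h' | h'
        · exact absurd h' hα0
        · exact h'
      · rcases mul_eq_zero.mp h with h' | h'
        · exact absurd h' hβ0
        · exact absurd h' hδ0

lemma li_det_ne_zero (a₁ a₂ b₁ b₂ : ℂ)
    (h : LinearIndependent ℂ
      ![(C a₁ * X 0 + C a₂ * X 1 : MvPolynomial (Fin 2) ℂ), C b₁ * X 0 + C b₂ * X 1]) :
    a₁ * b₂ - a₂ * b₁ ≠ 0 := by
  rw [LinearIndependent.pair_iff] at h
  intro hdet
  have key : ∀ s t : ℂ, s*a₁ + t*b₁ = 0 → s*a₂ + t*b₂ = 0 →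
      s • (C a₁ * X 0 + C a₂ * X 1 : MvPolynomial (Fin 2) ℂ)
        + t • (C b₁ * X 0 + C b₂ * X 1) = 0 := by
    intro s t h1 h2
    rw [smul_eq_C_mul, smul_eq_C_mul]
    have : (C s * (C a₁ * X 0 + C a₂ * X 1) + C t * (C b₁ * X 0 + C b₂ * X 1)
        : MvPolynomial (Fin 2) ℂ)
        = C (s*a₁ + t*b₁) * X 0 + C (s*a₂ + t*b₂) * X 1 := by
      simp only [map_add, map_mul]; ring
    rw [this, h1, h2]; simp
  by_cases ha₁ : a₁ = 0
  · by_cases ha₂ : a₂ = 0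
    · have := (h 1 0 (key 1 0 (by rw [ha₁]; ring) (by rw [ha₂]; ring))).1
      exact one_ne_zero this
    · have hb1 : b₁ = 0 := by
        have : a₂ * b₁ = 0 := by linear_combination -hdet + b₂ * ha₁
        rcases mul_eq_zero.mp this with h' | h'
        · exact absurd h' ha₂
        · exact h'
      have h1 : (-b₂/a₂)*a₁ + 1*b₁ = 0 := by rw [ha₁, hb1]; ring
      have h2 : (-b₂/a₂)*a₂ + 1*b₂ = 0 := by field_simp; ring
      have := (h (-b₂/a₂) 1 (key _ _ h1 h2)).2
      exact one_ne_zero this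
  · have h1 : (-b₁/a₁)*a₁ + 1*b₁ = 0 := by field_simp; ring
    have h2 : (-b₁/a₁)*a₂ + 1*b₂ = 0 := by
      field_simp
      linear_combination hdet
    have := (h (-b₁/a₁) 1 (key _ _ h1 h2)).2
    exact one_ne_zero this

/-- Uniqueness of the secant of the rational normal curve: if `u³ + v³ = w³ + k³` for two
pairs of linearly independent linear forms `(u,v)` and `(w,k)` in `ℂ[x,y]`, then
`(w,k) = (ζ·u, ζ'·v)` or `(w,k) = (ζ·v, ζ'·u)` for some cube roots of unity `ζ, ζ'`. -/
theorem secant_decomposition_unique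
    (u v w k : MvPolynomial (Fin 2) ℂ)
    (hu : u.IsHomogeneous 1) (hv : v.IsHomogeneous 1)
    (hw : w.IsHomogeneous 1) (hk : k.IsHomogeneous 1)
    (huv : LinearIndependent ℂ ![u, v]) (hwk : LinearIndependent ℂ ![w, k])
    (heq : u ^ 3 + v ^ 3 = w ^ 3 + k ^ 3) :
    ∃ ζ ζ' : ℂ, ζ ^ 3 = 1 ∧ ζ' ^ 3 = 1 ∧
      ((w = ζ • u ∧ k = ζ' • v) ∨ (w = ζ • v ∧ k = ζ' • u)) := by
  set a₁ := coeff (Finsupp.single 0 1) u with ha₁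
  set a₂ := coeff (Finsupp.single 1 1) u with ha₂
  set b₁ := coeff (Finsupp.single 0 1) v with hb₁
  set b₂ := coeff (Finsupp.single 1 1) v with hb₂
  set c₁ := coeff (Finsupp.single 0 1) w with hc₁
  set c₂ := coeff (Finsupp.single 1 1) w with hc₂
  set d₁ := coeff (Finsupp.single 0 1) k with hd₁
  set d₂ := coeff (Finsupp.single 1 1) k with hd₂
  have hu' := homog_one_decomp u hu
  have hv' := homog_one_decomp v hv
  have hw' := homog_one_decomp w hw
  have hk' := homog_one_decomp k hk
  have hA : a₁ * b₂ - a₂ * b₁ ≠ 0 := by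
    apply li_det_ne_zero
    rwa [← hu', ← hv']
  have hC : c₁ * d₂ - c₂ * d₁ ≠ 0 := by
    apply li_det_ne_zero
    rwa [← hw', ← hk']
  have hE : ∀ s t : ℂ,
      (a₁*s + a₂*t)^3 + (b₁*s + b₂*t)^3 = (c₁*s + c₂*t)^3 + (d₁*s + d₂*t)^3 := by
    intro s t
    have h := congrArg (eval ![s, t]) heq
    rw [hu', hv', hw', hk'] at h
    simpa using h
  obtain ⟨ζ, ζ', hζ, hζ', hcase⟩ := scalar_key a₁ a₂ b₁ b₂ c₁ c₂ d₁ d₂ hA hC hE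
  refine ⟨ζ, ζ', hζ, hζ', ?_⟩
  rcases hcase with ⟨e1, e2, e3, e4⟩ | ⟨e1, e2, e3, e4⟩
  · left
    constructor
    · rw [hw', hu', ← hc₁, ← hc₂, ← ha₁, ← ha₂, e1, e2, smul_eq_C_mul]
      simp only [map_mul]; ring
    · rw [hk', hv', ← hd₁, ← hd₂, ← hb₁, ← hb₂, e3, e4, smul_eq_C_mul]
      simp only [map_mul]; ring
  · right
    constructor
    · rw [hw', hv', ← hc₁, ← hc₂, ← hb₁, ← hb₂, e1, e2, smul_eq_C_mul]
      simp only [map_mul]; ring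
    · rw [hk', hu', ← hd₁, ← hd₂, ← ha₁, ← ha₂, e3, e4, smul_eq_C_mul]
      simp only [map_mul]; ring
end

section
/- Let u = u_0·x + u_1·y and v = v_0·x + v_1·y be linear forms in ℂ[x,y] and let t, s ∈ ℂ. Then ⟨t·u^3 + s·v^3, t·u^3 + s·v^3⟩_2 = 72·t·s·(u_0 v_1 − u_1 v_0)^2 · u·v. In particular, for t·s ≠ 0 and u, v linearly independent, the binary quadratic Q(p) := ⟨p,p⟩_2 of the cubic p = t·u^3 + s·v^3 is a nonzero multiple of u·v, so its projective roots are exactly the two points [u], [v] of the secant decomposition of p. -/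
open MvPolynomial

lemma it2' {α} (f : α → α) (x : α) : f^[2] x = f (f x) := rfl
lemma it1' {α} (f : α → α) (x : α) : f^[1] x = f x := rfl
lemma it0' {α} (f : α → α) (x : α) : f^[0] x = x := rfl

lemma pd3' (i : Fin 2) : pderiv i (3 : MvPolynomial (Fin 2) ℂ) = 0 := by
  rw [show (3 : MvPolynomial (Fin 2) ℂ) = C 3 by rw [map_ofNat], pderiv_C]

/-- For linear forms `u = u₀x + u₁y`, `v = v₀x + v₁y` and scalars `t, s`:
`⟨t·u³ + s·v³, t·u³ + s·v³⟩₂ = 72·t·s·(u₀v₁ − u₁v₀)²·u·v`. -/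
theorem transvectant_of_sum_of_cubes (u₀ u₁ v₀ v₁ t s : ℂ) :
    transvectant 2
        (t • (C u₀ * X 0 + C u₁ * X 1) ^ 3 + s • (C v₀ * X 0 + C v₁ * X 1) ^ 3)
        (t • (C u₀ * X 0 + C u₁ * X 1) ^ 3 + s • (C v₀ * X 0 + C v₁ * X 1) ^ 3)
      = (72 * t * s * (u₀ * v₁ - u₁ * v₀) ^ 2) •
          ((C u₀ * X 0 + C u₁ * X 1) * (C v₀ * X 0 + C v₁ * X 1)) := by
  rw [transvectant]
  rw [Finset.sum_range_succ, Finset.sum_range_succ, Finset.sum_range_one]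
  norm_num [dX, dY, it0', it1', it2', pd3']
  simp only [smul_eq_C_mul, nsmul_eq_mul, map_mul, map_sub, map_pow, map_ofNat, map_one,
    Nat.cast_ofNat]
  ring
end

section
/- For every binary quadratic h ∈ ℂ[x,y] (homogeneous of degree 2) and all binary cubics p, v ∈ ℂ[x,y] (homogeneous of degree 3), the identity ⟨⟨h,p⟩_1, v⟩_3 = (3/2)·⟨h, ⟨p,v⟩_2⟩_2 holds in ℂ. Here p ↦ ⟨h,p⟩_1 is the infinitesimal action on binary cubics of the element of sl(2,ℂ) corresponding to the quadratic h, and the identity expresses that the quadratic map Q(p) = ⟨p,p⟩_2 is a moment map for the symplectic form Ω(p,v) = ⟨p,v⟩_3 on the space Sym^3(ℂ^2) of binary cubics. -/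
open MvPolynomial

@[simp] lemma pderiv_ofNat' (i : Fin 2) (n : ℕ) [n.AtLeastTwo] :
    pderiv i (no_index (OfNat.ofNat n) : MvPolynomial (Fin 2) ℂ) = 0 := by
  rw [show (OfNat.ofNat n : MvPolynomial (Fin 2) ℂ) = C (OfNat.ofNat n) from (map_ofNat C n).symm,
    pderiv_C]

@[simp] lemma pderiv_natCast' (i : Fin 2) (n : ℕ) :
    pderiv i ((n : ℕ) : MvPolynomial (Fin 2) ℂ) = 0 := by
  rw [← map_natCast (C : ℂ →+* MvPolynomial (Fin 2) ℂ) n, pderiv_C]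

lemma deg2 (d : Fin 2 →₀ ℕ) : d.degree = d 0 + d 1 := by
  have := Finset.sum_subset (Finset.subset_univ d.support)
    (fun i _ hi => Finsupp.notMem_support_iff.mp hi)
  rw [Finsupp.degree_apply, this, Fin.sum_univ_two]

lemma mon2 (m : Fin 2 →₀ ℕ) (c : ℂ) :
    (monomial m c : MvPolynomial (Fin 2) ℂ) = C c * X 0 ^ (m 0) * X 1 ^ (m 1) := by
  rw [monomial_eq, Finsupp.prod_fintype _ _ (fun _ => pow_zero _), Fin.prod_univ_two, mul_assoc]

lemma hrep {n : ℕ} {f : MvPolynomial (Fin 2) ℂ} (hf : f.IsHomogeneous n) :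
    f = ∑ i ∈ Finset.range (n+1),
      C (coeff (Finsupp.single 0 i + Finsupp.single 1 (n-i)) f) * X 0 ^ i * X 1 ^ (n-i) := by
  have key : ∀ (i : ℕ) (c : ℂ) (m : Fin 2 →₀ ℕ),
      coeff m (C c * X 0 ^ i * X 1 ^ (n-i) : MvPolynomial (Fin 2) ℂ)
        = if Finsupp.single 0 i + Finsupp.single 1 (n-i) = m then c else 0 := by
    intro i c m
    rw [show (C c * X 0 ^ i * X 1 ^ (n-i) : MvPolynomial (Fin 2) ℂ)
        = monomial (Finsupp.single 0 i + Finsupp.single 1 (n-i)) c by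
      rw [mon2]; simp [Finsupp.single_apply], coeff_monomial]
  ext m
  rw [coeff_sum]
  simp only [key]
  by_cases hd : m 0 + m 1 = n
  · rw [Finset.sum_eq_single (m 0)]
    · have hm : Finsupp.single (0:Fin 2) (m 0) + Finsupp.single 1 (n - m 0) = m := by
        ext j; fin_cases j <;> simp [Finsupp.single_apply] <;> omega
      rw [if_pos hm, hm]
    · intro i _ hi
      rw [if_neg]
      intro hcontra
      apply hi
      have := DFunLike.congr_fun hcontra 0
      simpa [Finsupp.single_apply] using this
    · intro hm
      exact absurd (Finset.mem_range.mpr (by omega)) hm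
  · rw [hf.coeff_eq_zero (by rw [deg2]; exact hd), Finset.sum_eq_zero]
    intro i hi
    have hi' := Finset.mem_range.mp hi
    rw [if_neg]
    intro hcontra
    have h0 := DFunLike.congr_fun hcontra 0
    have h1 := DFunLike.congr_fun hcontra 1
    simp [Finsupp.single_apply] at h0 h1
    exact hd (by omega)

lemma dX_iter_add (n : ℕ) (f g : MvPolynomial (Fin 2) ℂ) :
    dX^[n] (f + g) = dX^[n] f + dX^[n] g := by
  induction n generalizing f g with
  | zero => simp
  | succ n ih => simp [Function.iterate_succ_apply, dX, map_add, ih, -Function.iterate_succ]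

lemma dY_iter_add (n : ℕ) (f g : MvPolynomial (Fin 2) ℂ) :
    dY^[n] (f + g) = dY^[n] f + dY^[n] g := by
  induction n generalizing f g with
  | zero => simp
  | succ n ih => simp [Function.iterate_succ_apply, dY, map_add, ih, -Function.iterate_succ]

lemma dX_iter_smul (n : ℕ) (c : ℂ) (f : MvPolynomial (Fin 2) ℂ) :
    dX^[n] (c • f) = c • dX^[n] f := by
  induction n generalizing f with
  | zero => simp
  | succ n ih => simp [Function.iterate_succ_apply, dX, map_smul, ih, -Function.iterate_succ]

lemma dY_iter_smul (n : ℕ) (c : ℂ) (f : MvPolynomial (Fin 2) ℂ) :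
    dY^[n] (c • f) = c • dY^[n] f := by
  induction n generalizing f with
  | zero => simp
  | succ n ih => simp [Function.iterate_succ_apply, dY, map_smul, ih, -Function.iterate_succ]

lemma dX_iter_zero (n : ℕ) : dX^[n] (0 : MvPolynomial (Fin 2) ℂ) = 0 := by
  simpa using dX_iter_smul n 0 0

lemma dY_iter_zero (n : ℕ) : dY^[n] (0 : MvPolynomial (Fin 2) ℂ) = 0 := by
  simpa using dY_iter_smul n 0 0

lemma tv_add_left (k : ℕ) (f g ψ : MvPolynomial (Fin 2) ℂ) :
    transvectant k (f + g) ψ = transvectant k f ψ + transvectant k g ψ := by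
  simp only [transvectant, dY_iter_add, dX_iter_add, add_mul, smul_add,
    Finset.sum_add_distrib]

lemma tv_add_right (k : ℕ) (φ f g : MvPolynomial (Fin 2) ℂ) :
    transvectant k φ (f + g) = transvectant k φ f + transvectant k φ g := by
  simp only [transvectant, dY_iter_add, dX_iter_add, mul_add, smul_add,
    Finset.sum_add_distrib]

lemma tv_smul_left (k : ℕ) (c : ℂ) (f ψ : MvPolynomial (Fin 2) ℂ) :
    transvectant k (c • f) ψ = c • transvectant k f ψ := by
  simp only [transvectant, dY_iter_smul, dX_iter_smul, smul_mul_assoc, Finset.smul_sum]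
  exact Finset.sum_congr rfl fun j _ => smul_comm _ _ _

lemma tv_smul_right (k : ℕ) (c : ℂ) (φ f : MvPolynomial (Fin 2) ℂ) :
    transvectant k φ (c • f) = c • transvectant k φ f := by
  simp only [transvectant, dY_iter_smul, dX_iter_smul, mul_smul_comm, Finset.smul_sum]
  exact Finset.sum_congr rfl fun j _ => smul_comm _ _ _

lemma tv_zero_left (k : ℕ) (ψ : MvPolynomial (Fin 2) ℂ) :
    transvectant k 0 ψ = 0 := by
  simp [transvectant, dX_iter_zero, dY_iter_zero]

lemma tv_zero_right (k : ℕ) (φ : MvPolynomial (Fin 2) ℂ) :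
    transvectant k φ 0 = 0 := by
  simp [transvectant, dX_iter_zero, dY_iter_zero]

lemma tv_sum_left {ι : Type*} (k : ℕ) (s : Finset ι) (f : ι → MvPolynomial (Fin 2) ℂ)
    (ψ : MvPolynomial (Fin 2) ℂ) :
    transvectant k (∑ i ∈ s, f i) ψ = ∑ i ∈ s, transvectant k (f i) ψ := by
  induction s using Finset.cons_induction with
  | empty => simp [tv_zero_left]
  | cons a s ha ih => simp [Finset.sum_cons, tv_add_left, ih]

lemma tv_sum_right {ι : Type*} (k : ℕ) (s : Finset ι) (φ : MvPolynomial (Fin 2) ℂ)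
    (f : ι → MvPolynomial (Fin 2) ℂ) :
    transvectant k φ (∑ i ∈ s, f i) = ∑ i ∈ s, transvectant k φ (f i) := by
  induction s using Finset.cons_induction with
  | empty => simp [tv_zero_right]
  | cons a s ha ih => simp [Finset.sum_cons, tv_add_right, ih]

set_option maxHeartbeats 4000000 in
lemma key_monomial (a b c : ℂ) (i j k : ℕ) (hi : i < 3) (hj : j < 4) (hk : k < 4) :
    (2:ℂ) • transvectant 3
        (transvectant 1 (C a * X 0 ^ i * X 1 ^ (2-i)) (C b * X 0 ^ j * X 1 ^ (3-j)))
        (C c * X 0 ^ k * X 1 ^ (3-k))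
      = (3:ℂ) • transvectant 2 (C a * X 0 ^ i * X 1 ^ (2-i))
          (transvectant 2 (C b * X 0 ^ j * X 1 ^ (3-j)) (C c * X 0 ^ k * X 1 ^ (3-k))) := by
  interval_cases i <;> interval_cases j <;> interval_cases k <;>
  · simp only [transvectant, Finset.sum_range_succ, Finset.sum_range_zero, zero_add]
    norm_num only
    simp only [Function.iterate_succ, Function.iterate_zero, Function.comp_apply, id_eq, dX, dY]
    simp [pderiv_mul, pderiv_pow, pderiv_X_self, pderiv_C,
      pderiv_X_of_ne (show (1:Fin 2) ≠ 0 by decide), pderiv_X_of_ne (show (0:Fin 2) ≠ 1 by decide),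
      smul_eq_C_mul, map_ofNat]
    try ring


set_option maxHeartbeats 1000000 in
/-- The moment map identity -/
theorem moment_map_identity
    (h p v : MvPolynomial (Fin 2) ℂ)
    (hh : h.IsHomogeneous 2) (hp : p.IsHomogeneous 3) (hv : v.IsHomogeneous 3) :
    transvectant 3 (transvectant 1 h p) v
      = (3 / 2 : ℂ) • transvectant 2 h (transvectant 2 p v) := by
  have half : ∀ A B : MvPolynomial (Fin 2) ℂ,
      (2:ℂ) • A = (3:ℂ) • B → A = (3 / 2 : ℂ) • B := by
    intro A B hAB
    have h1 : A = (2⁻¹ : ℂ) • ((2:ℂ) • A) := by rw [smul_smul]; norm_num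
    rw [h1, hAB, smul_smul]
    norm_num
  apply half
  rw [hrep hh, hrep hp, hrep hv]
  simp only [tv_sum_left, tv_sum_right, Finset.smul_sum]
  refine Finset.sum_congr rfl fun k hk => Finset.sum_congr rfl fun j hj =>
    Finset.sum_congr rfl fun i hi => ?_
  rw [Finset.mem_range] at hi hj hk
  exact key_monomial _ _ _ i j k hi hj hk
end

section
/- Let α, β, γ ∈ ℂ be pairwise distinct and suppose D := (α−β)^2 + (α−γ)^2 + (β−γ)^2 ≠ 0. Let p(x,y) := (x−αy)(x−βy)(x−γy) and let q(z) := ⟨p,p⟩_2(z,1) be the dehomogenized binary quadratic. Then q(w_+) = q(w_−) = 0, where w_± = [α^2(β+γ) + β^2(γ+α) + γ^2(α+β) − 6αβγ ± √3·i·(α^2(β−γ) + β^2(γ−α) + γ^2(α−β))] / D. That is, the roots of the Gergonne quadric Q(p) = ⟨p,p⟩_2 are given by this explicit formula. -/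
open MvPolynomial

/-- Explicit computation of the dehomogenized Gergonne quadric. -/
lemma gergonne_key (α β γ z : ℂ) :
    MvPolynomial.eval ![z, 1]
      (transvectant 2 ((X 0 - C α * X 1) * (X 0 - C β * X 1) * (X 0 - C γ * X 1))
        ((X 0 - C α * X 1) * (X 0 - C β * X 1) * (X 0 - C γ * X 1))) =
    -4 * (((α - β) ^ 2 + (α - γ) ^ 2 + (β - γ) ^ 2) * z ^ 2
      - 2 * (α ^ 2 * (β + γ) + β ^ 2 * (γ + α) + γ ^ 2 * (α + β) - 6 * α * β * γ) * z
      + (2 * (α ^ 2 * β ^ 2 + α ^ 2 * γ ^ 2 + β ^ 2 * γ ^ 2)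
          - 2 * α * β * γ * (α + β + γ))) := by
  simp only [transvectant, dX, dY, Finset.sum_range_succ, Finset.sum_range_zero,
    Function.iterate_succ, Function.iterate_zero, Function.comp_apply, id_eq,
    map_mul, map_sub, map_add, pderiv_mul, pderiv_X, pderiv_C, smul_eq_mul]
  simp [Matrix.cons_val_zero, Matrix.cons_val_one]
  ring


lemma quad_root (D M E N i3 w : ℂ) (hD : D ≠ 0) (hi3 : i3 ^ 2 = -3)
    (h : M ^ 2 - D * E = -3 * N ^ 2) (hw : D * w = M + i3 * N) :
    -4 * (D * w ^ 2 - 2 * M * w + E) = 0 := by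
  have h2 : D * (D * w ^ 2 - 2 * M * w + E) = 0 := by
    linear_combination (D * w + i3 * N - M) * hw + N ^ 2 * hi3 - h
  rcases mul_eq_zero.mp h2 with h3 | h3
  · exact absurd h3 hD
  · rw [h3, mul_zero]

/-- Roots of the Gergonne quadric: for pairwise distinct `α, β, γ` with
`D = (α−β)² + (α−γ)² + (β−γ)² ≠ 0`, the dehomogenized quadratic `⟨p,p⟩₂(z,1)` of
`p = (x−αy)(x−βy)(x−γy)` vanishes at the two explicit points `w±`. -/
theorem gergonne_roots
    (α β γ : ℂ) (hαβ : α ≠ β) (hαγ : α ≠ γ) (hβγ : β ≠ γ)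
    (hD : (α - β) ^ 2 + (α - γ) ^ 2 + (β - γ) ^ 2 ≠ 0)
    (i3 : ℂ) (hi3 : i3 ^ 2 = -3)
    (p : MvPolynomial (Fin 2) ℂ)
    (hpdef : p = (X 0 - C α * X 1) * (X 0 - C β * X 1) * (X 0 - C γ * X 1)) :
    MvPolynomial.eval
        ![(α ^ 2 * (β + γ) + β ^ 2 * (γ + α) + γ ^ 2 * (α + β) - 6 * α * β * γ
              + i3 * (α ^ 2 * (β - γ) + β ^ 2 * (γ - α) + γ ^ 2 * (α - β)))
            / ((α - β) ^ 2 + (α - γ) ^ 2 + (β - γ) ^ 2), 1]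
        (transvectant 2 p p) = 0 ∧
    MvPolynomial.eval
        ![(α ^ 2 * (β + γ) + β ^ 2 * (γ + α) + γ ^ 2 * (α + β) - 6 * α * β * γ
              - i3 * (α ^ 2 * (β - γ) + β ^ 2 * (γ - α) + γ ^ 2 * (α - β)))
            / ((α - β) ^ 2 + (α - γ) ^ 2 + (β - γ) ^ 2), 1]
        (transvectant 2 p p) = 0 := by
  subst hpdef
  rw [gergonne_key, gergonne_key]
  constructor
  · exact quad_root _ _ _ (α ^ 2 * (β - γ) + β ^ 2 * (γ - α) + γ ^ 2 * (α - β)) i3 _ hD hi3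
      (by ring) (mul_div_cancel₀ _ hD)
  · refine quad_root _ _ _ (-(α ^ 2 * (β - γ) + β ^ 2 * (γ - α) + γ ^ 2 * (α - β))) i3 _ hD hi3
      (by ring) ?_
    rw [mul_div_cancel₀ _ hD]
    ring
end

section
/- Let f : ℂ → ℂ be entire and define F : ℂ^5 → ℂ by the contour integral over the unit circle F(τ, z, y, w, σ) := ∮_{|λ|=1} f(τ + λ·z + λ^2·y − λ^3·w + λ^4·σ) dλ. Then F satisfies the six second-order linear PDEs (partial derivatives taken along the five complex coordinate directions): F_{yτ} − F_{zz} = 0, F_{τw} + F_{yz} = 0, F_{τσ} + F_{zw} = 0, F_{zw} + F_{yy} = 0, F_{σz} + F_{wy} = 0, and F_{σy} − F_{ww} = 0. -/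
/-- Partial derivative of a function on `ℂ⁵` along the `i`-th coordinate direction. -/
noncomputable def pdC (i : Fin 5) (F : (Fin 5 → ℂ) → ℂ) : (Fin 5 → ℂ) → ℂ :=
  fun v => deriv (fun t : ℂ => F (Function.update v i t)) (v i)

/-- The contour-integral (Penrose–Radon / generalised Legendre) transform
`F(τ, z, y, w, σ) = ∮_{|λ|=1} f(τ + λz + λ²y − λ³w + λ⁴σ) dλ`
with coordinates `(τ, z, y, w, σ) = (v 0, v 1, v 2, v 3, v 4)`. -/
noncomputable def radonF (f : ℂ → ℂ) : (Fin 5 → ℂ) → ℂ :=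
  fun v =>
    circleIntegral
      (fun l => f (v 0 + l * v 1 + l ^ 2 * v 2 - l ^ 3 * v 3 + l ^ 4 * v 4)) 0 1

open Metric Set Complex

lemma entire_deriv (h : ℂ → ℂ) (hh : Differentiable ℂ h) : Differentiable ℂ (deriv h) := by
  have : AnalyticOnNhd ℂ h Set.univ :=
    hh.differentiableOn.analyticOnNhd isOpen_univ
  exact fun z => (this.deriv z trivial).differentiableAt

lemma hasDerivAt_circleInt (p c b : ℂ → ℂ) (hp : Continuous p) (hc : Continuous c)
    (hb : Continuous b) (h : ℂ → ℂ) (hh : Differentiable ℂ h) (t₀ : ℂ) :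
    HasDerivAt (fun t => circleIntegral (fun l => p l * h (b l + c l * t)) 0 1)
      (circleIntegral (fun l => p l * (c l * deriv h (b l + c l * t₀))) 0 1) t₀ := by
  have hh' : Continuous (deriv h) := (entire_deriv h hh).continuous
  have hec : Continuous (circleMap 0 1) := continuous_circleMap 0 1
  set e : ℝ → ℂ := circleMap 0 1 with he
  set F : ℂ → ℝ → ℂ := fun x θ =>
    deriv (circleMap 0 1) θ • (p (e θ) * h (b (e θ) + c (e θ) * x)) with hF
  set F' : ℂ → ℝ → ℂ := fun x θ =>
    deriv (circleMap 0 1) θ • (p (e θ) * (c (e θ) * deriv h (b (e θ) + c (e θ) * x))) with hF'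
  have hdc : Continuous (fun θ => deriv (circleMap 0 1) θ) := by
    simp only [deriv_circleMap]; exact (continuous_circleMap 0 1).mul continuous_const
  have hg : Continuous (fun q : ℂ × ℝ =>
      p (e q.2) * (c (e q.2) * deriv h (b (e q.2) + c (e q.2) * q.1))) := by
    have h2 : Continuous (fun q : ℂ × ℝ => e q.2) := hec.comp continuous_snd
    exact ((hp.comp h2).mul ((hc.comp h2).mul
      (hh'.comp ((hb.comp h2).add ((hc.comp h2).mul continuous_fst)))))
  obtain ⟨C, hC⟩ := ((isCompact_closedBall t₀ 1).prod
    (isCompact_uIcc (a := (0:ℝ)) (b := 2*Real.pi))).exists_bound_of_continuousOn hg.continuousOn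
  have main := intervalIntegral.hasDerivAt_integral_of_dominated_loc_of_deriv_le
    (F := F) (F' := F') (x₀ := t₀) (a := 0) (b := 2*Real.pi) (μ := MeasureTheory.volume)
    (bound := fun _ => C) (Metric.ball_mem_nhds t₀ one_pos)
    (Filter.Eventually.of_forall (fun x => by
      apply Continuous.aestronglyMeasurable
      exact hdc.smul ((hp.comp hec).mul
        (hh.continuous.comp ((hb.comp hec).add ((hc.comp hec).mul continuous_const))))))
    (by
      apply Continuous.intervalIntegrable
      exact hdc.smul ((hp.comp hec).mul
        (hh.continuous.comp ((hb.comp hec).add ((hc.comp hec).mul continuous_const)))))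
    (by
      apply Continuous.aestronglyMeasurable
      exact hdc.smul ((hp.comp hec).mul (((hc.comp hec)).mul
        (hh'.comp ((hb.comp hec).add ((hc.comp hec).mul continuous_const))))))
    (Filter.Eventually.of_forall (fun θ hθ x hx => by
      have h1 : ‖deriv (circleMap 0 1) θ‖ = 1 := by
        rw [deriv_circleMap]; simp
      have := hC (x, θ) ⟨ball_subset_closedBall hx, uIoc_subset_uIcc hθ⟩
      calc ‖F' x θ‖ = ‖deriv (circleMap 0 1) θ‖ *
          ‖p (e θ) * (c (e θ) * deriv h (b (e θ) + c (e θ) * x))‖ := norm_smul _ _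
        _ ≤ C := by rw [h1, one_mul]; exact this))
    (by apply Continuous.intervalIntegrable; exact continuous_const)
    (Filter.Eventually.of_forall (fun θ hθ x hx => by
      have inner : HasDerivAt (fun y : ℂ => b (e θ) + c (e θ) * y) (c (e θ)) x := by
        simpa using ((hasDerivAt_id x).const_mul (c (e θ))).const_add (b (e θ))
      have hcomp : HasDerivAt (fun y => h (b (e θ) + c (e θ) * y))
          (deriv h (b (e θ) + c (e θ) * x) * c (e θ)) x :=
        (hh.differentiableAt.hasDerivAt).comp x inner
      have := (hcomp.const_mul (p (e θ))).const_smul (deriv (circleMap 0 1) θ)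
      convert this using 1
      · rfl
      simp only [hF', smul_eq_mul]
      ring))
  have key := main.2
  have e1 : (fun x => ∫ θ in (0:ℝ)..(2*Real.pi), F x θ) =
      (fun t => circleIntegral (fun l => p l * h (b l + c l * t)) 0 1) := by
    funext x; simp only [circleIntegral, hF, he]
  have e2 : (∫ θ in (0:ℝ)..(2*Real.pi), F' t₀ θ) =
      circleIntegral (fun l => p l * (c l * deriv h (b l + c l * t₀))) 0 1 := by
    simp only [circleIntegral, hF', he]
  rw [e1, e2] at key
  exact key

/-- The coefficient of ` v i` in `ω` as a function of `λ`. -/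
def cf : Fin 5 → ℂ → ℂ := ![fun _ => 1, fun l => l, fun l => l ^ 2, fun l => -l ^ 3, fun l => l ^ 4]

lemma cf_cont (i : Fin 5) : Continuous (cf i) := by
  fin_cases i <;> simp only [cf] <;>
    first
    | exact continuous_const
    | exact continuous_id
    | exact (continuous_pow _)
    | exact (continuous_pow 3).neg

/-- The section `ω(λ, v)`. -/
def om (v : Fin 5 → ℂ) (l : ℂ) : ℂ := v 0 + l * v 1 + l ^ 2 * v 2 - l ^ 3 * v 3 + l ^ 4 * v 4

lemma om_cont (v : Fin 5 → ℂ) : Continuous (fun l => om v l) := by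
  unfold om; fun_prop

lemma om_update (v : Fin 5 → ℂ) (i : Fin 5) (t l : ℂ) :
    om (Function.update v i t) l = (om v l - cf i l * v i) + cf i l * t := by
  fin_cases i <;> simp [om, cf, Function.update] <;> ring

lemma pd_int (q : ℂ → ℂ) (hq : Continuous q) (g : ℂ → ℂ) (hg : Differentiable ℂ g) (i : Fin 5) :
    pdC i (fun v => circleIntegral (fun l => q l * g (om v l)) 0 1)
      = fun v => circleIntegral (fun l => q l * (cf i l * deriv g (om v l))) 0 1 := by
  funext v
  have hb : Continuous (fun l => om v l - cf i l * v i) :=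
    (om_cont v).sub ((cf_cont i).mul continuous_const)
  have key := hasDerivAt_circleInt q (cf i) (fun l => om v l - cf i l * v i)
    hq (cf_cont i) hb g hg (v i)
  have efun : (fun t : ℂ =>
        circleIntegral (fun l => q l * g (om (Function.update v i t) l)) 0 1)
      = (fun t : ℂ =>
        circleIntegral (fun l => q l * g ((om v l - cf i l * v i) + cf i l * t)) 0 1) := by
    funext t; congr 1; funext l; rw [om_update]
  have eval : (fun l => q l * (cf i l * deriv g ((om v l - cf i l * v i) + cf i l * v i)))
      = (fun l => q l * (cf i l * deriv g (om v l))) := by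
    funext l; rw [sub_add_cancel]
  rw [eval] at key
  show deriv (fun t : ℂ =>
    circleIntegral (fun l => q l * g (om (Function.update v i t) l)) 0 1) (v i) = _
  rw [efun]
  exact key.deriv

lemma circleInt_neg (g : ℂ → ℂ) :
    circleIntegral (fun l => -g l) 0 1 = -circleIntegral g 0 1 := by
  simp [circleIntegral, smul_neg, intervalIntegral.integral_neg]

/-- For entire `f`, the contour integral `F` satisfies the six second-order PDEs
`F_{yτ} − F_{zz} = 0`, `F_{τw} + F_{yz} = 0`, `F_{τσ} + F_{zw} = 0`,
`F_{zw} + F_{yy} = 0`, `F_{σz} + F_{wy} = 0`, `F_{σy} − F_{ww} = 0`. -/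
theorem radon_transform_pdes (f : ℂ → ℂ) (hf : Differentiable ℂ f) :
    ∀ v : Fin 5 → ℂ,
      pdC 2 (pdC 0 (radonF f)) v - pdC 1 (pdC 1 (radonF f)) v = 0 ∧
      pdC 0 (pdC 3 (radonF f)) v + pdC 2 (pdC 1 (radonF f)) v = 0 ∧
      pdC 0 (pdC 4 (radonF f)) v + pdC 1 (pdC 3 (radonF f)) v = 0 ∧
      pdC 1 (pdC 3 (radonF f)) v + pdC 2 (pdC 2 (radonF f)) v = 0 ∧
      pdC 4 (pdC 1 (radonF f)) v + pdC 3 (pdC 2 (radonF f)) v = 0 ∧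
      pdC 4 (pdC 2 (radonF f)) v - pdC 3 (pdC 3 (radonF f)) v = 0 := by
  intro v
  have hf' : Differentiable ℂ (deriv f) := entire_deriv f hf
  have hrad : radonF f = fun v => circleIntegral (fun l => (1:ℂ) * f (om v l)) 0 1 := by
    funext w; unfold radonF om; simp only [one_mul]
  have step1 : ∀ i : Fin 5, pdC i (radonF f)
      = fun v => circleIntegral (fun l => cf i l * deriv f (om v l)) 0 1 := by
    intro i
    rw [hrad, pd_int (fun _ => (1:ℂ)) continuous_const f hf i]
    funext w; congr 1; funext l; rw [one_mul]
  have step2 : ∀ i j : Fin 5, pdC j (pdC i (radonF f)) v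
      = circleIntegral (fun l => cf i l * (cf j l * deriv (deriv f) (om v l))) 0 1 := by
    intro i j
    rw [step1 i, pd_int (cf i) (cf_cont i) (deriv f) hf' j]
  refine ⟨?_, ?_, ?_, ?_, ?_, ?_⟩
  · rw [step2 0 2, step2 1 1]
    rw [show (fun l => cf 0 l * (cf 2 l * deriv (deriv f) (om v l)))
        = (fun l => cf 1 l * (cf 1 l * deriv (deriv f) (om v l))) from
      funext fun l => by show (1:ℂ) * (l^2 * _) = l * (l * _); ring]
    exact sub_self _
  · rw [step2 3 0, step2 1 2]
    rw [show (fun l => cf 3 l * (cf 0 l * deriv (deriv f) (om v l)))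
        = (fun l => -(cf 1 l * (cf 2 l * deriv (deriv f) (om v l)))) from
      funext fun l => by show (-l^3) * ((1:ℂ) * _) = -(l * (l^2 * _)); ring]
    rw [circleInt_neg]; exact neg_add_cancel _
  · rw [step2 4 0, step2 3 1]
    rw [show (fun l => cf 4 l * (cf 0 l * deriv (deriv f) (om v l)))
        = (fun l => -(cf 3 l * (cf 1 l * deriv (deriv f) (om v l)))) from
      funext fun l => by show l^4 * ((1:ℂ) * _) = -((-l^3) * (l * _)); ring]
    rw [circleInt_neg]; exact neg_add_cancel _
  · rw [step2 3 1, step2 2 2]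
    rw [show (fun l => cf 3 l * (cf 1 l * deriv (deriv f) (om v l)))
        = (fun l => -(cf 2 l * (cf 2 l * deriv (deriv f) (om v l)))) from
      funext fun l => by show (-l^3) * (l * _) = -((l^2) * (l^2 * _)); ring]
    rw [circleInt_neg]; exact neg_add_cancel _
  · rw [step2 1 4, step2 2 3]
    rw [show (fun l => cf 1 l * (cf 4 l * deriv (deriv f) (om v l)))
        = (fun l => -(cf 2 l * (cf 3 l * deriv (deriv f) (om v l)))) from
      funext fun l => by show l * (l^4 * _) = -((l^2) * ((-l^3) * _)); ring]
    rw [circleInt_neg]; exact neg_add_cancel _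
  · rw [step2 2 4, step2 3 3]
    rw [show (fun l => cf 2 l * (cf 4 l * deriv (deriv f) (om v l)))
        = (fun l => cf 3 l * (cf 3 l * deriv (deriv f) (om v l))) from
      funext fun l => by show l^2 * (l^4 * _) = (-l^3) * ((-l^3) * _); ring]
    exact sub_self _
end
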